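/- arXiv:2504.02649 — 7 statements merged into one kernel-verified Lean document; each statement's English description precedes it below -/
import Mathlib

section
/- Let (A_k)_{k≥1} be a summable family of d×d real matrices with nonnegative entries satisfying ρ(Σ_{k=1}^∞ A_k) < 1, and write S = Σ_{k=1}^∞ A_k. Let (x_t)_{t∈ℤ} be a bounded sequence in ℝ^d and K̄ ∈ ℝ^d a vector with nonnegative components such that for all t ∈ ℤ, |x_t| ≼ Σ_{k=1}^∞ A_k |x_{t−k}| + K̄. Then I − S is invertible and for every t ∈ ℤ, |x_t| ≼ (I − S)^{−1} K̄. -/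
open Filter Topology Finset
open scoped NNReal ENNReal

/-- The spectral radius of a real matrix, via its complexification. -/
noncomputable def specRad {d : ℕ} (A : Matrix (Fin d) (Fin d) ℝ) : ENNReal :=
  spectralRadius ℂ (A.map Complex.ofReal)

section aux
attribute [local instance] Matrix.linftyOpNormedAddCommGroup Matrix.linftyOpNormedRing
  Matrix.linftyOpNormedAlgebra

lemma specRad_pow_bound {d : ℕ} (S : Matrix (Fin d) (Fin d) ℝ) (hρ : specRad S < 1) :
    ∃ r : ℝ, 0 ≤ r ∧ r < 1 ∧ ∃ N : ℕ, ∀ n, N ≤ n → ∀ i j, |(S ^ n) i j| ≤ r ^ n := by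
  obtain ⟨R, hR1, hR2⟩ := exists_between hρ
  have hRtop : R ≠ ⊤ := (hR2.trans ENNReal.one_lt_top).ne
  set r : ℝ≥0 := R.toNNReal with hr
  have hcoe : (r : ℝ≥0∞) = R := ENNReal.coe_toNNReal hRtop
  rw [← hcoe] at hR1 hR2
  have hr1 : r < 1 := by exact_mod_cast hR2
  have hgel := spectrum.pow_nnnorm_pow_one_div_tendsto_nhds_spectralRadius
      (S.map Complex.ofReal)
  have hev : ∀ᶠ n : ℕ in atTop,
      (‖(S.map Complex.ofReal) ^ n‖₊ : ℝ≥0∞) ^ (1 / (n : ℝ)) < (r : ℝ≥0∞) :=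
    hgel.eventually_lt_const hR1
  obtain ⟨N, hN⟩ := eventually_atTop.1 hev
  have hentry_le : ∀ (M : Matrix (Fin d) (Fin d) ℂ) i j, ‖M i j‖₊ ≤ ‖M‖₊ := by
    intro M i j
    rw [Matrix.linfty_opNNNorm_def]
    exact le_trans (Finset.single_le_sum (f := fun j => ‖M i j‖₊)
      (fun _ _ => zero_le) (Finset.mem_univ j))
      (Finset.le_sup (f := fun i => ∑ j, ‖M i j‖₊) (Finset.mem_univ i))
  refine ⟨r, r.coe_nonneg, hr1, max N 1, fun n hn i j => ?_⟩
  have hn1 : 1 ≤ n := le_trans (le_max_right N 1) hn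
  have hnN : N ≤ n := le_trans (le_max_left N 1) hn
  have hnn : (n : ℝ) ≠ 0 := by positivity
  have h1 : ‖(S.map Complex.ofReal) ^ n‖₊ ≤ r ^ n := by
    have h := (hN n hnN).le
    have h2 := ENNReal.rpow_le_rpow h (by positivity : (0:ℝ) ≤ (n:ℝ))
    rw [← ENNReal.rpow_mul, one_div, inv_mul_cancel₀ hnn, ENNReal.rpow_one] at h2
    have h3 : (‖(S.map Complex.ofReal) ^ n‖₊ : ℝ≥0∞) ≤ ((r ^ n : ℝ≥0) : ℝ≥0∞) := by
      rw [ENNReal.coe_pow, ← ENNReal.rpow_natCast ((r:ℝ≥0∞)) n]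
      exact h2
    exact_mod_cast h3
  have hmap : (S.map Complex.ofReal) ^ n = (S ^ n).map Complex.ofReal := by
    have := map_pow (Complex.ofRealHom.mapMatrix) S n
    exact this.symm
  have hent : ‖((S.map Complex.ofReal) ^ n) i j‖₊ ≤ ‖(S.map Complex.ofReal) ^ n‖₊ :=
    hentry_le _ i j
  have h4 : ‖((S.map Complex.ofReal) ^ n) i j‖₊ ≤ r ^ n := hent.trans h1
  have h5 : ((S.map Complex.ofReal) ^ n) i j = Complex.ofReal ((S ^ n) i j) := by
    rw [hmap]; rfl
  rw [h5] at h4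
  have h6 : ‖Complex.ofReal ((S ^ n) i j)‖ ≤ ((r : ℝ)) ^ n := by
    have := (NNReal.coe_le_coe.2 h4 :
      (‖(Complex.ofReal ((S ^ n) i j))‖₊ : ℝ) ≤ ((r ^ n : ℝ≥0) : ℝ))
    simpa [coe_nnnorm] using this
  simpa [Complex.norm_real, Real.norm_eq_abs] using h6
end aux


lemma tsum_telescope_real {g : ℕ → ℝ} (hg : Summable g) (h0 : Filter.Tendsto g Filter.atTop (nhds 0)) :
    ∑' n : ℕ, (g n - g (n + 1)) = g 0 := by
  have hs1 : Summable fun n : ℕ => g (n + 1) := (summable_nat_add_iff 1).2 hg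
  have hs : Summable fun n : ℕ => g n - g (n + 1) := hg.sub hs1
  have h1 := hs.hasSum.tendsto_sum_nat
  have h2 : Filter.Tendsto (fun n => ∑ m ∈ Finset.range n, (g m - g (m + 1)))
      Filter.atTop (nhds (g 0)) := by
    have heq : ∀ n, ∑ m ∈ Finset.range n, (g m - g (m + 1)) = g 0 - g n :=
      fun n => Finset.sum_range_sub' g n
    simp only [heq]
    simpa using (tendsto_const_nhds.sub h0)
  exact tendsto_nhds_unique h1 h2

/-- If `(A_k)_{k≥1}` are summable nonnegative matrices with `S = Σ A_k`, `ρ(S) < 1`,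
`(x_t)_{t∈ℤ}` is bounded, `K̄` is a nonnegative vector and
`|x_t| ≼ Σ_{k≥1} A_k |x_{t-k}| + K̄` for all `t`, then `I - S` is invertible and
`|x_t| ≼ (I - S)⁻¹ K̄`.  The family `(A_k)_{k≥1}` is encoded with `A 0 = 0`. -/
theorem stmt2 {d : ℕ} (A : ℕ → Matrix (Fin d) (Fin d) ℝ)
    (hA0 : A 0 = 0) (hAnn : ∀ k i j, 0 ≤ A k i j)
    (hAsum : Summable A)
    (S : Matrix (Fin d) (Fin d) ℝ) (hS : S = ∑' k, A k)
    (hρ : specRad S < 1)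
    (x : ℤ → Fin d → ℝ) (hxbdd : ∃ M : ℝ, ∀ t i, |x t i| ≤ M)
    (K : Fin d → ℝ) (hK : ∀ i, 0 ≤ K i)
    (hrec : ∀ t : ℤ, ∀ i,
      |x t i| ≤ (∑' k : ℕ, (A k).mulVec (fun j => |x (t - (k : ℤ)) j|) i) + K i) :
    IsUnit (1 - S) ∧ ∀ t : ℤ, ∀ i, |x t i| ≤ (1 - S)⁻¹.mulVec K i := by
  classical
  obtain ⟨r, hr0, hr1, N, hrN⟩ := specRad_pow_bound S hρ
  have hmv : ∀ (M : Matrix (Fin d) (Fin d) ℝ) (v : Fin d → ℝ) (i : Fin d),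
      M.mulVec v i = ∑ j, M i j * v j := fun M v i => rfl
  have hAsum_i : ∀ i, Summable fun k => A k i := fun i => Pi.summable.1 hAsum i
  have hAsum_ij : ∀ i j, Summable fun k => A k i j := fun i j =>
    Pi.summable.1 (hAsum_i i) j
  have hSentry : ∀ i j, S i j = ∑' k, A k i j := by
    intro i j
    rw [hS, show (∑' k, A k) i = ∑' k, A k i from tsum_apply hAsum,
        show (∑' k, A k i) j = ∑' k, A k i j from tsum_apply (hAsum_i i)]
  have hSnn : ∀ i j, 0 ≤ S i j := fun i j =>
    (hSentry i j) ▸ tsum_nonneg (fun k => hAnn k i j)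
  have hpow_nn : ∀ n i j, 0 ≤ (S ^ n) i j := by
    intro n
    induction n with
    | zero =>
      intro i j
      rw [pow_zero, Matrix.one_apply]
      split <;> norm_num
    | succ n ih =>
      intro i j
      rw [pow_succ, Matrix.mul_apply]
      exact Finset.sum_nonneg fun l _ => mul_nonneg (ih i l) (hSnn l j)
  obtain ⟨M, hM⟩ := hxbdd
  set b : Fin d → ℝ := fun i => ⨆ t : ℤ, |x t i| with hbdef
  have hbdd : ∀ i, BddAbove (Set.range fun t : ℤ => |x t i|) := fun i =>
    ⟨M, by rintro y ⟨t, rfl⟩; exact hM t i⟩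
  have hxb : ∀ t i, |x t i| ≤ b i := fun t i => le_ciSup (hbdd i) t
  have hb0 : ∀ i, 0 ≤ b i := fun i => le_trans (abs_nonneg _) (hxb 0 i)
  have hmono : ∀ (Mm : Matrix (Fin d) (Fin d) ℝ), (∀ i j, 0 ≤ Mm i j) →
      ∀ (u v : Fin d → ℝ), (∀ j, u j ≤ v j) → ∀ i, Mm.mulVec u i ≤ Mm.mulVec v i := by
    intro Mm hMm u v huv i
    rw [hmv, hmv]
    exact Finset.sum_le_sum fun j _ => mul_le_mul_of_nonneg_left (huv j) (hMm i j)
  have hsum_mv : ∀ (v : Fin d → ℝ) i, Summable fun k => (A k).mulVec v i := by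
    intro v i
    simp only [hmv]
    exact summable_sum fun j _ => (hAsum_ij i j).mul_right (v j)
  have htsum_mv : ∀ (v : Fin d → ℝ) i, ∑' k, (A k).mulVec v i = S.mulVec v i := by
    intro v i
    calc ∑' k, (A k).mulVec v i = ∑' k, ∑ j, A k i j * v j := by simp only [hmv]
      _ = ∑ j, ∑' k, A k i j * v j := Summable.tsum_finsetSum fun j _ => (hAsum_ij i j).mul_right (v j)
      _ = ∑ j, S i j * v j := by
          refine Finset.sum_congr rfl fun j _ => ?_
          rw [tsum_mul_right, ← hSentry i j]
      _ = S.mulVec v i := (hmv S v i).symm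
  have hbSbK : ∀ i, b i ≤ S.mulVec b i + K i := by
    intro i
    refine ciSup_le fun t => (hrec t i).trans (add_le_add_left ?_ (K i))
    have hle : ∀ k : ℕ, (A k).mulVec (fun j => |x (t - (k:ℤ)) j|) i ≤ (A k).mulVec b i :=
      fun k => hmono (A k) (hAnn k) _ _ (fun j => hxb _ j) i
    have hnn' : ∀ k : ℕ, 0 ≤ (A k).mulVec (fun j => |x (t - (k:ℤ)) j|) i := by
      intro k
      rw [hmv]
      exact Finset.sum_nonneg fun j _ => mul_nonneg (hAnn k i j) (abs_nonneg _)
    calc ∑' k : ℕ, (A k).mulVec (fun j => |x (t - (k:ℤ)) j|) i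
        ≤ ∑' k, (A k).mulVec b i :=
          Summable.tsum_le_tsum hle (Summable.of_nonneg_of_le hnn' hle (hsum_mv b i)) (hsum_mv b i)
      _ = S.mulVec b i := htsum_mv b i
  have hiter : ∀ n i, b i ≤ (S ^ n).mulVec b i
      + ∑ m ∈ Finset.range n, (S ^ m).mulVec K i := by
    intro n
    induction n with
    | zero => intro i; simp [Matrix.one_mulVec]
    | succ n ih =>
      intro i
      have h1 : (S ^ n).mulVec b i ≤ (S ^ (n+1)).mulVec b i + (S ^ n).mulVec K i := by
        calc (S ^ n).mulVec b i
            ≤ (S ^ n).mulVec (fun j => S.mulVec b j + K j) i :=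
              hmono _ (hpow_nn n) _ _ hbSbK i
          _ = (S ^ n).mulVec (S.mulVec b) i + (S ^ n).mulVec K i := by
              rw [show (fun j => S.mulVec b j + K j) = S.mulVec b + K from rfl,
                Matrix.mulVec_add]
              rfl
          _ = (S ^ (n+1)).mulVec b i + (S ^ n).mulVec K i := by
              rw [Matrix.mulVec_mulVec, ← pow_succ]
      calc b i ≤ (S ^ n).mulVec b i + ∑ m ∈ Finset.range n, (S ^ m).mulVec K i := ih i
        _ ≤ ((S ^ (n+1)).mulVec b i + (S ^ n).mulVec K i)
            + ∑ m ∈ Finset.range n, (S ^ m).mulVec K i := add_le_add_left h1 _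
        _ = (S ^ (n+1)).mulVec b i + ∑ m ∈ Finset.range (n+1), (S ^ m).mulVec K i := by
            rw [Finset.sum_range_succ]; ring
  have hgeom : ∀ i j, Summable fun n => (S ^ n) i j := by
    intro i j
    refine Summable.of_norm_bounded_eventually_nat
      (summable_geometric_of_lt_one hr0 hr1) ?_
    filter_upwards [eventually_ge_atTop N] with n hn
    simpa [Real.norm_eq_abs] using hrN n hn i j
  have hpow0 : ∀ i j, Tendsto (fun n => (S ^ n) i j) atTop (𝓝 0) := by
    intro i j
    refine squeeze_zero_norm' ?_ (tendsto_pow_atTop_nhds_zero_of_lt_one hr0 hr1)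
    filter_upwards [eventually_ge_atTop N] with n hn
    simpa [Real.norm_eq_abs] using hrN n hn i j
  set T : Matrix (Fin d) (Fin d) ℝ := Matrix.of fun i j => ∑' n : ℕ, (S ^ n) i j with hTdef
  have hTapp : ∀ i j, T i j = ∑' n : ℕ, (S ^ n) i j := fun i j => rfl
  have htele : ∀ i j, ∑' n : ℕ, ((S ^ n) i j - (S ^ (n+1)) i j)
      = (1 : Matrix (Fin d) (Fin d) ℝ) i j := by
    intro i j
    have h := tsum_telescope_real (g := fun n => (S ^ n) i j) (hgeom i j) (hpow0 i j)
    simpa [pow_zero] using h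
  have hTmul_left : (1 - S) * T = 1 := by
    ext i j
    rw [Matrix.mul_apply]
    calc ∑ l, (1 - S) i l * T l j
        = ∑ l, ∑' n : ℕ, (1 - S) i l * (S ^ n) l j :=
          Finset.sum_congr rfl fun l _ => by rw [hTapp, tsum_mul_left]
      _ = ∑' n : ℕ, ∑ l, (1 - S) i l * (S ^ n) l j :=
          (Summable.tsum_finsetSum fun l _ => (hgeom l j).mul_left _).symm
      _ = ∑' n : ℕ, ((S ^ n) i j - (S ^ (n+1)) i j) := by
          refine tsum_congr fun n => ?_
          rw [← Matrix.mul_apply, sub_mul, one_mul, ← pow_succ']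
          simp [Matrix.sub_apply]
      _ = (1 : Matrix (Fin d) (Fin d) ℝ) i j := htele i j
  have hTmul_right : T * (1 - S) = 1 := by
    ext i j
    rw [Matrix.mul_apply]
    calc ∑ l, T i l * (1 - S) l j
        = ∑ l, ∑' n : ℕ, (S ^ n) i l * (1 - S) l j :=
          Finset.sum_congr rfl fun l _ => by rw [hTapp, tsum_mul_right]
      _ = ∑' n : ℕ, ∑ l, (S ^ n) i l * (1 - S) l j :=
          (Summable.tsum_finsetSum fun l _ => (hgeom i l).mul_right _).symm
      _ = ∑' n : ℕ, ((S ^ n) i j - (S ^ (n+1)) i j) := by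
          refine tsum_congr fun n => ?_
          rw [← Matrix.mul_apply, mul_sub, mul_one, ← pow_succ]
          simp [Matrix.sub_apply]
      _ = (1 : Matrix (Fin d) (Fin d) ℝ) i j := htele i j
  refine ⟨(Matrix.isUnit_iff_isUnit_det _).2 (Matrix.isUnit_det_of_right_inverse hTmul_left), fun t i => ?_⟩
  rw [Matrix.inv_eq_right_inv hTmul_left]
  refine (hxb t i).trans ?_
  have hsum_mK : Summable fun m => (S ^ m).mulVec K i := by
    simp only [hmv]
    exact summable_sum fun j _ => (hgeom i j).mul_right (K j)
  have htsumK : ∑' m : ℕ, (S ^ m).mulVec K i = T.mulVec K i := by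
    calc ∑' m : ℕ, (S ^ m).mulVec K i = ∑' m : ℕ, ∑ j, (S ^ m) i j * K j := by
          simp only [hmv]
      _ = ∑ j, ∑' m : ℕ, (S ^ m) i j * K j :=
          Summable.tsum_finsetSum fun j _ => (hgeom i j).mul_right (K j)
      _ = ∑ j, T i j * K j :=
          Finset.sum_congr rfl fun j _ => by rw [hTapp, tsum_mul_right]
      _ = T.mulVec K i := (hmv T K i).symm
  have hlim2 : Tendsto (fun n => ∑ m ∈ Finset.range n, (S ^ m).mulVec K i)
      atTop (𝓝 (T.mulVec K i)) := by
    have h := hsum_mK.hasSum.tendsto_sum_nat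
    rwa [htsumK] at h
  have hlim1 : Tendsto (fun n => (S ^ n).mulVec b i) atTop (𝓝 0) := by
    have h : Tendsto (fun n => ∑ j, (S ^ n) i j * b j) atTop (𝓝 (∑ j : Fin d, 0 * b j)) :=
      tendsto_finset_sum _ fun j _ => (hpow0 i j).mul_const (b j)
    simpa [hmv] using h
  have hfinal := ge_of_tendsto' (hlim1.add hlim2) (fun n => hiter n i)
  simpa using hfinal
end

section
/- Fix τ > 0 and let (φ_k)_{k∈ℕ} be a square-summable real sequence (φ ∈ ℓ²(ℕ)). For every ε > 0 there exist a positive integer r and real numbers ν_1, …, ν_r such that (Σ_{k=0}^∞ (φ_k − Σ_{m=1}^r ν_m e^{−2km/τ})²)^{1/2} ≤ ε. In other words, the linear span of the geometric sequences (e^{−2mk/τ})_{k∈ℕ}, m = 1, 2, 3, …, is dense in ℓ²(ℕ). -/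
/-- ℓ²-density of exponential polynomials: for any square-summable real sequence `φ`,
any `τ > 0` and any `ε > 0`, there are `r ≥ 1` and coefficients `ν_1, …, ν_r` with
`(Σ_k (φ_k − Σ_{m=1}^r ν_m e^{−2km/τ})²)^{1/2} ≤ ε`. -/
theorem stmt4 (τ : ℝ) (hτ : 0 < τ) (φ : ℕ → ℝ) (hφ : Summable (fun k => φ k ^ 2))
    (ε : ℝ) (hε : 0 < ε) :
    ∃ r : ℕ, 0 < r ∧ ∃ ν : Fin r → ℝ,
      Real.sqrt (∑' k : ℕ,
        (φ k - ∑ m : Fin r, ν m * Real.exp (-(2 * (k : ℝ) * ((m : ℕ) + 1)) / τ)) ^ 2) ≤ ε := by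
  set a : ℝ := Real.exp (-2/τ) with ha_def
  have ha0 : 0 < a := Real.exp_pos _
  have ha0' : (0:ℝ) ≤ a := ha0.le
  have ha1 : a < 1 := by
    rw [ha_def, Real.exp_lt_one_iff]
    exact div_neg_of_neg_of_pos (by norm_num) hτ
  have ha2 : a ^ 2 < 1 := by nlinarith
  have ha2' : (0:ℝ) ≤ a ^ 2 := sq_nonneg a
  -- choose N so that the tail of φ² is small
  obtain ⟨N, hN⟩ : ∃ N : ℕ, ∑' k, φ (k + (N+1)) ^ 2 ≤ ε^2/16 := by
    have h := tendsto_sum_nat_add (fun k => φ k ^ 2)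
    have h2 : ∀ᶠ i in Filter.atTop, (∑' k, φ (k + i) ^ 2) < ε^2/16 :=
      h.eventually_lt_const (by positivity)
    obtain ⟨n, hn⟩ := Filter.eventually_atTop.mp h2
    exact ⟨n, (hn (n+1) (by omega)).le⟩
  -- nodes and Lagrange constants
  set v : ℕ → ℝ := fun i => a ^ i with hv_def
  set s : Finset ℕ := Finset.range (N+1) with hs_def
  have hinj : Set.InjOn v s := fun i _ j _ h => (pow_right_strictAnti₀ ha0 ha1).injective h
  set C : ℕ → ℝ := fun j => ∏ i ∈ s.erase j, |a^j - a^i|⁻¹ with hC_def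
  have hC0 : ∀ j, 0 ≤ C j := fun j =>
    Finset.prod_nonneg fun i _ => inv_nonneg.mpr (abs_nonneg _)
  set B : ℝ := ∑ j ∈ s, |φ j| * C j with hB_def
  have hB0 : 0 ≤ B := Finset.sum_nonneg fun j _ => mul_nonneg (abs_nonneg _) (hC0 j)
  -- choose L
  obtain ⟨L, hL1, hLb⟩ : ∃ L : ℕ, 1 ≤ L ∧ B^2 * a^(2*L) * (1 - a^2)⁻¹ ≤ ε^2/16 := by
    have hgeo : Filter.Tendsto (fun L : ℕ => (a^2) ^ L) Filter.atTop (nhds 0) :=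
      tendsto_pow_atTop_nhds_zero_of_lt_one ha2' ha2
    have h3 : Filter.Tendsto (fun L : ℕ => B^2 * (a^2)^L * (1 - a^2)⁻¹)
        Filter.atTop (nhds 0) := by
      have := (hgeo.const_mul (B^2)).mul_const (1 - a^2)⁻¹
      simpa using this
    have h4 : ∀ᶠ L in Filter.atTop, B^2 * (a^2)^L * (1 - a^2)⁻¹ < ε^2/16 :=
      h3.eventually_lt_const (by positivity)
    obtain ⟨L, hL⟩ := (h4.and (Filter.eventually_ge_atTop 1)).exists
    exact ⟨L, hL.2, by rw [pow_mul]; exact hL.1.le⟩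
  have haNL : (0:ℝ) < a ^ (N*L) := pow_pos ha0 _
  -- interpolating polynomial
  set q : Polynomial ℝ := Lagrange.interpolate s v (fun i => φ i / a^(i*L)) with hq_def
  set p : Polynomial ℝ := Polynomial.X ^ L * q with hp_def
  set P : ℕ → ℝ := fun k => p.eval (a^k) with hP_def
  -- node values
  have hnode : ∀ k, k ≤ N → P k = φ k := by
    intro k hk
    have hk' : k ∈ s := Finset.mem_range.mpr (by omega)
    have h1 : Polynomial.eval (v k) (Lagrange.interpolate s v (fun i => φ i / a^(i*L)))
        = φ k / a^(k*L) := Lagrange.eval_interpolate_at_node _ hinj hk'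
    have hvk : v k = a ^ k := rfl
    show Polynomial.eval (a ^ k) (Polynomial.X ^ L * q) = φ k
    rw [Polynomial.eval_mul, Polynomial.eval_pow, Polynomial.eval_X]
    rw [hvk] at h1
    rw [hq_def, h1, ← pow_mul]
    field_simp
  -- bound on basis polynomials
  have hbasis : ∀ j ∈ s, ∀ t : ℝ, 0 ≤ t → t ≤ 1 →
      |(Lagrange.basis s v j).eval t| ≤ C j := by
    intro j hj t ht0 ht1
    rw [Lagrange.basis, Polynomial.eval_prod, Finset.abs_prod]
    refine Finset.prod_le_prod (fun i _ => abs_nonneg _) (fun i _ => ?_)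
    rw [Lagrange.basisDivisor, Polynomial.eval_mul, Polynomial.eval_C,
      Polynomial.eval_sub, Polynomial.eval_X, Polynomial.eval_C, abs_mul, abs_inv]
    have hvi0 : 0 ≤ v i := pow_nonneg ha0' i
    have hvi1 : v i ≤ 1 := pow_le_one₀ ha0' ha1.le
    have h1 : |t - v i| ≤ 1 := abs_le.mpr ⟨by linarith, by linarith⟩
    have : |v j - v i|⁻¹ * |t - v i| ≤ |v j - v i|⁻¹ * 1 :=
      mul_le_mul_of_nonneg_left h1 (inv_nonneg.mpr (abs_nonneg _))
    simpa using this
  -- bound on q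
  have hq : ∀ t : ℝ, 0 ≤ t → t ≤ 1 → |q.eval t| ≤ B / a^(N*L) := by
    intro t ht0 ht1
    rw [hq_def, Lagrange.interpolate_apply, Polynomial.eval_finset_sum]
    calc |∑ i ∈ s, Polynomial.eval t (Polynomial.C (φ i / a^(i*L)) * Lagrange.basis s v i)|
        ≤ ∑ i ∈ s, |Polynomial.eval t (Polynomial.C (φ i / a^(i*L)) * Lagrange.basis s v i)| :=
          Finset.abs_sum_le_sum_abs _ _
      _ ≤ ∑ i ∈ s, |φ i| * C i / a^(N*L) := by
          refine Finset.sum_le_sum (fun i hi => ?_)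
          rw [Polynomial.eval_mul, Polynomial.eval_C, abs_mul, abs_div, abs_pow,
            abs_of_nonneg ha0']
          have h1 : a^(N*L) ≤ a^(i*L) := by
            apply pow_le_pow_of_le_one ha0' ha1.le
            have : i ≤ N := by
              have := Finset.mem_range.mp hi; omega
            exact Nat.mul_le_mul_right L this
          have h2 : |φ i| / a^(i*L) ≤ |φ i| / a^(N*L) :=
            div_le_div_of_nonneg_left (abs_nonneg _) haNL h1
          calc |φ i| / a^(i*L) * |(Lagrange.basis s v i).eval t|
              ≤ (|φ i| / a^(N*L)) * C i := by
                apply mul_le_mul h2 (hbasis i hi t ht0 ht1) (abs_nonneg _)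
                positivity
            _ = |φ i| * C i / a^(N*L) := by ring
      _ = B / a^(N*L) := by rw [hB_def, Finset.sum_div]
  -- pointwise bound on P
  have hP : ∀ k : ℕ, |P k| ≤ B / a^(N*L) * a^(k*L) := by
    intro k
    show |Polynomial.eval (a ^ k) (Polynomial.X ^ L * q)| ≤ B / a ^ (N * L) * a ^ (k * L)
    rw [Polynomial.eval_mul, Polynomial.eval_pow, Polynomial.eval_X,
      abs_mul, abs_pow, abs_of_nonneg (pow_nonneg ha0' k), ← pow_mul]
    have h1 : |q.eval (a^k)| ≤ B / a^(N*L) :=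
      hq _ (pow_nonneg ha0' _) (pow_le_one₀ ha0' ha1.le)
    calc a^(k*L) * |q.eval (a^k)| ≤ a^(k*L) * (B / a^(N*L)) :=
          mul_le_mul_of_nonneg_left h1 (pow_nonneg ha0' _)
      _ = B / a^(N*L) * a^(k*L) := by ring
  -- uniform geometric bound (for summability)
  have hPsq : ∀ k : ℕ, P k ^ 2 ≤ (B / a^(N*L))^2 * (a^2)^k := by
    intro k
    have h1 : a^(k*L) ≤ a^k :=
      pow_le_pow_of_le_one ha0' ha1.le (Nat.le_mul_of_pos_right k (by omega))
    have h2 : |P k| ≤ B / a^(N*L) * a^k := by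
      calc |P k| ≤ B / a^(N*L) * a^(k*L) := hP k
        _ ≤ B / a^(N*L) * a^k := mul_le_mul_of_nonneg_left h1 (by positivity)
    calc P k ^ 2 = |P k|^2 := (sq_abs _).symm
      _ ≤ (B / a^(N*L) * a^k)^2 := pow_le_pow_left₀ (abs_nonneg _) h2 2
      _ = (B / a^(N*L))^2 * (a^2)^k := by rw [mul_pow, ← pow_mul, ← pow_mul, mul_comm 2 k]
  -- tail bound on P
  have hPtail : ∀ k : ℕ, P (k + (N+1)) ^ 2 ≤ B^2 * a^(2*L) * (a^2)^k := by
    intro k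
    have h1 : |P (k + (N+1))| ≤ B * a^L * a^k := by
      have h2 : a^((k+(N+1))*L) = a^(N*L) * (a^(k*L) * a^L) := by
        rw [← pow_add, ← pow_add]; congr 1; ring
      calc |P (k + (N+1))| ≤ B / a^(N*L) * a^((k+(N+1))*L) := hP _
        _ = B * (a^(k*L) * a^L) := by rw [h2]; field_simp
        _ ≤ B * (a^k * a^L) := by
            have h3 : a^(k*L) ≤ a^k :=
              pow_le_pow_of_le_one ha0' ha1.le (Nat.le_mul_of_pos_right k (by omega))
            have := mul_le_mul_of_nonneg_right h3 (pow_nonneg ha0' L)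
            nlinarith [pow_nonneg ha0' k, pow_nonneg ha0' L]
        _ = B * a^L * a^k := by ring
    calc P (k + (N+1)) ^ 2 = |P (k + (N+1))|^2 := (sq_abs _).symm
      _ ≤ (B * a^L * a^k)^2 := pow_le_pow_left₀ (abs_nonneg _) h1 2
      _ = B^2 * a^(2*L) * (a^2)^k := by
          rw [mul_pow, mul_pow, ← pow_mul, ← pow_mul]; ring
  -- summability
  have hgeo_sum : Summable (fun k : ℕ => (a^2)^k) := summable_geometric_of_lt_one ha2' ha2
  have hφtail : Summable (fun k : ℕ => φ (k + (N+1)) ^ 2) := by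
    exact hφ.comp_injective (add_left_injective (N+1))
  set g : ℕ → ℝ := fun k => (φ k - P k)^2 with hg_def
  have hg_sum : Summable g := by
    apply Summable.of_nonneg_of_le (fun k => sq_nonneg _)
      (f := fun k => 2 * φ k ^ 2 + 2 * ((B / a^(N*L))^2 * (a^2)^k))
    · intro k
      have := hPsq k
      nlinarith [sq_nonneg (φ k + P k)]
    · exact (hφ.mul_left 2).add ((hgeo_sum.mul_left _).mul_left 2)
  -- tail sum bound
  have hmaj_sum : Summable (fun k : ℕ => 2 * φ (k + (N+1)) ^ 2 + 2 * (B^2 * a^(2*L) * (a^2)^k)) := by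
    exact (hφtail.mul_left 2).add ((hgeo_sum.mul_left _).mul_left 2)
  have hT2 : ∑' k, g (k + (N+1)) ≤ ε^2/4 := by
    have hle : ∀ k : ℕ, g (k + (N+1)) ≤ 2 * φ (k + (N+1)) ^ 2 + 2 * (B^2 * a^(2*L) * (a^2)^k) := by
      intro k
      have := hPtail k
      have hgk : g (k + (N+1)) = (φ (k + (N+1)) - P (k + (N+1)))^2 := rfl
      rw [hgk]
      nlinarith [sq_nonneg (φ (k + (N+1)) + P (k + (N+1)))]
    calc ∑' k, g (k + (N+1))
        ≤ ∑' k, (2 * φ (k + (N+1)) ^ 2 + 2 * (B^2 * a^(2*L) * (a^2)^k)) :=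
          Summable.tsum_le_tsum hle (by exact hg_sum.comp_injective (add_left_injective (N+1)))
            hmaj_sum
      _ = 2 * (∑' k, φ (k + (N+1)) ^ 2) + 2 * (B^2 * a^(2*L) * (1 - a^2)⁻¹) := by
          rw [Summable.tsum_add (hφtail.mul_left 2)
            ((hgeo_sum.mul_left _).mul_left 2), tsum_mul_left, tsum_mul_left, tsum_mul_left,
            tsum_geometric_of_lt_one ha2' ha2]
      _ ≤ 2 * (ε^2/16) + 2 * (ε^2/16) := by
          gcongr
      _ = ε^2/4 := by ring
  -- total sum bound
  have hT : ∑' k, g k ≤ ε^2 := by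
    have hsplit := (Summable.sum_add_tsum_nat_add (N+1) hg_sum).symm
    have hzero : ∑ k ∈ Finset.range (N+1), g k = 0 := by
      refine Finset.sum_eq_zero (fun k hk => ?_)
      have : k ≤ N := by have := Finset.mem_range.mp hk; omega
      simp [hg_def, hnode k this]
    rw [hsplit, hzero, zero_add]
    nlinarith [hT2, sq_nonneg ε]
  -- coefficients
  refine ⟨p.natDegree + 1, Nat.succ_pos _, fun m => p.coeff (m+1), ?_⟩
  have hrep : ∀ k : ℕ,
      (∑ m : Fin (p.natDegree+1), p.coeff ((m:ℕ)+1) * Real.exp (-(2*(k:ℝ)*((m:ℕ)+1))/τ)) = P k := by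
    intro k
    have hc0 : p.coeff 0 = 0 := by
      rw [Polynomial.coeff_zero_eq_eval_zero, hp_def, Polynomial.eval_mul,
        Polynomial.eval_pow, Polynomial.eval_X, zero_pow (by omega : L ≠ 0), zero_mul]
    have hexp : ∀ m : ℕ, Real.exp (-(2*(k:ℝ)*((m:ℕ)+1))/τ) = (a^k)^(m+1) := by
      intro m
      rw [← pow_mul, ha_def, ← Real.exp_nat_mul]
      congr 1
      push_cast
      ring
    have heval : P k = ∑ i ∈ Finset.range (p.natDegree + 2), p.coeff i * (a^k)^i :=
      Polynomial.eval_eq_sum_range' (by omega) (a^k)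
    rw [Fin.sum_univ_eq_sum_range (fun m => p.coeff (m+1) * Real.exp (-(2*(k:ℝ)*((m:ℕ)+1))/τ))]
    simp only [hexp]
    rw [heval, Finset.sum_range_succ' (fun i => p.coeff i * (a^k)^i) (p.natDegree+1), hc0]
    simp
  simp only [hrep]
  have hT' : Real.sqrt (∑' k, g k) ≤ ε := by
    calc Real.sqrt (∑' k, g k) ≤ Real.sqrt (ε^2) := Real.sqrt_le_sqrt hT
      _ = ε := Real.sqrt_sq hε.le
  exact hT'
end

section
/- Fix τ > 0 and let (φ_k)_{k∈ℕ} be a square-summable real sequence. If Σ_{k=0}^∞ φ_k e^{−2nk/τ} = 0 for every positive integer n, then φ_k = 0 for all k ∈ ℕ. -/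
/-- If a square-summable real sequence `φ` satisfies `Σ_k φ_k e^{−2nk/τ} = 0` for every
positive integer `n` (and some fixed `τ > 0`), then `φ = 0`. -/
theorem stmt5 (τ : ℝ) (hτ : 0 < τ) (φ : ℕ → ℝ) (hφ : Summable (fun k => φ k ^ 2))
    (h : ∀ n : ℕ, 0 < n → ∑' k : ℕ, φ k * Real.exp (-(2 * (n : ℝ) * (k : ℝ)) / τ) = 0) :
    ∀ k, φ k = 0 := by
  set r : ℝ := Real.exp (-2 / τ) with hrdef
  have hr0 : 0 < r := Real.exp_pos _
  have hr1 : r < 1 := by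
    rw [hrdef]
    rw [Real.exp_lt_one_iff]
    exact div_neg_of_neg_of_pos (by norm_num) hτ
  set B : ℝ := Real.sqrt (∑' k, φ k ^ 2) with hBdef
  have hB0 : 0 ≤ B := Real.sqrt_nonneg _
  have hB : ∀ k, |φ k| ≤ B := by
    intro k
    have h1 : φ k ^ 2 ≤ ∑' j, φ j ^ 2 :=
      Summable.le_tsum hφ k (fun j _ => sq_nonneg _)
    calc |φ k| = Real.sqrt (φ k ^ 2) := by rw [Real.sqrt_sq_eq_abs]
      _ ≤ B := Real.sqrt_le_sqrt h1
  -- rewrite hypothesis in terms of powers of r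
  have h' : ∀ n : ℕ, 0 < n → ∑' k : ℕ, φ k * r ^ (n * k) = 0 := by
    intro n hn
    rw [← h n hn]
    refine tsum_congr fun k => ?_
    congr 1
    rw [hrdef, ← Real.exp_nat_mul]
    congr 1
    push_cast
    ring
  have hgeo : Summable (fun k : ℕ => B * r ^ k) :=
    (summable_geometric_of_lt_one hr0.le hr1).mul_left B
  have hsum : ∀ (a n : ℕ), 0 < n → Summable (fun k : ℕ => φ (k + a) * r ^ (n * k)) := by
    intro a n hn
    apply Summable.of_norm_bounded hgeo
    intro k
    have hrk : r ^ (n * k) ≤ r ^ k :=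
      pow_le_pow_of_le_one hr0.le hr1.le (Nat.le_mul_of_pos_left k hn)
    have : ‖φ (k + a) * r ^ (n * k)‖ = |φ (k + a)| * r ^ (n * k) := by
      rw [norm_mul, Real.norm_eq_abs, Real.norm_eq_abs, abs_of_pos (pow_pos hr0 _)]
    rw [this]
    exact mul_le_mul (hB _) hrk (pow_pos hr0 _).le hB0
  intro k
  induction k using Nat.strong_induction_on with
  | _ m ih =>
    set C : ℝ := ∑' k : ℕ, B * r ^ k with hCdef
    have key : ∀ n : ℕ, 0 < n → |φ m| ≤ C * r ^ n := by
      intro n hn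
      have hs0 : Summable (fun k : ℕ => φ k * r ^ (n * k)) := by
        have := hsum 0 n hn
        simpa using this
      have hsplit := Summable.sum_add_tsum_nat_add (f := fun k : ℕ => φ k * r ^ (n * k)) (m + 1) hs0
      have hfin : ∑ i ∈ Finset.range (m + 1), φ i * r ^ (n * i) = φ m * r ^ (n * m) := by
        rw [Finset.sum_range_succ]
        have : ∑ i ∈ Finset.range m, φ i * r ^ (n * i) = 0 := by
          apply Finset.sum_eq_zero
          intro i hi
          rw [ih i (Finset.mem_range.mp hi), zero_mul]
        rw [this, zero_add]
      have htail : ∑' k : ℕ, φ (k + (m + 1)) * r ^ (n * (k + (m + 1)))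
          = r ^ (n * (m + 1)) * ∑' k : ℕ, φ (k + (m + 1)) * r ^ (n * k) := by
        rw [← tsum_mul_left]
        refine tsum_congr fun k => ?_
        rw [mul_add, pow_add]
        ring
      set S : ℝ := ∑' k : ℕ, φ (k + (m + 1)) * r ^ (n * k) with hSdef
      have heq : φ m * r ^ (n * m) + r ^ (n * (m + 1)) * S = 0 := by
        rw [← hfin, ← htail]
        simpa using hsplit.trans (h' n hn)
      have hpow : r ^ (n * (m + 1)) = r ^ (n * m) * r ^ n := by
        rw [← pow_add]; ring_nf
      have hφm : φ m = -(r ^ n * S) := by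
        have hne : r ^ (n * m) ≠ 0 := (pow_pos hr0 _).ne'
        have : r ^ (n * m) * (φ m + r ^ n * S) = 0 := by
          rw [hpow] at heq; linarith [heq]
        have h2 : φ m + r ^ n * S = 0 := by
          rcases mul_eq_zero.mp this with h3 | h3
          · exact absurd h3 hne
          · exact h3
        linarith
      have hSb : |S| ≤ C := by
        have habs : Summable (fun k : ℕ => |φ (k + (m + 1)) * r ^ (n * k)|) :=
          (hsum (m + 1) n hn).abs
        have h1 : ‖∑' k : ℕ, φ (k + (m + 1)) * r ^ (n * k)‖
            ≤ ∑' k : ℕ, ‖φ (k + (m + 1)) * r ^ (n * k)‖ :=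
          norm_tsum_le_tsum_norm (by simpa only [Real.norm_eq_abs] using habs)
        simp only [Real.norm_eq_abs] at h1
        calc |S| ≤ ∑' k : ℕ, |φ (k + (m + 1)) * r ^ (n * k)| := h1
          _ ≤ C := by
              refine Summable.tsum_le_tsum (fun k => ?_) habs hgeo
              rw [abs_mul, abs_of_pos (pow_pos hr0 _)]
              exact mul_le_mul (hB _)
                (pow_le_pow_of_le_one hr0.le hr1.le (Nat.le_mul_of_pos_left k hn))
                (pow_pos hr0 _).le hB0
      have hC0 : 0 ≤ C := tsum_nonneg fun k => mul_nonneg hB0 (pow_pos hr0 _).le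
      calc |φ m| = r ^ n * |S| := by
            rw [hφm, abs_neg, abs_mul, abs_of_pos (pow_pos hr0 _)]
        _ ≤ r ^ n * C := by
            exact mul_le_mul_of_nonneg_left hSb (pow_pos hr0 _).le
        _ = C * r ^ n := mul_comm _ _
    have hT : Filter.Tendsto (fun n : ℕ => C * r ^ n) Filter.atTop (nhds 0) := by
      have := tendsto_pow_atTop_nhds_zero_of_lt_one hr0.le hr1
      simpa using this.const_mul C
    have : |φ m| ≤ 0 :=
      ge_of_tendsto hT (Filter.eventually_atTop.2 ⟨1, fun n hn => key n hn⟩)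
    exact abs_nonpos_iff.mp this
end

section
/- Fix τ > 0 and let (φ_k)_{k∈ℕ} be an absolutely summable real sequence (φ ∈ ℓ¹(ℕ)). For every ε > 0 there exist a positive integer r and real numbers ν_1, …, ν_r such that Σ_{k=0}^∞ |φ_k − Σ_{m=1}^r ν_m e^{−(2m+1)k/τ}| ≤ ε. In other words, the linear span of the sequences (e^{−(2m+1)k/τ})_{k∈ℕ}, m = 1, 2, 3, …, is dense in ℓ¹(ℕ). -/
open Finset

namespace Stmt6Aux

noncomputable def q (τ : ℝ) (m : ℕ) : ℝ := Real.exp (-(2 * (m : ℝ) + 3) / τ)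

lemma q_pos (τ : ℝ) (m : ℕ) : 0 < q τ m := Real.exp_pos _

lemma q_lt_one {τ : ℝ} (hτ : 0 < τ) (m : ℕ) : q τ m < 1 := by
  rw [q, show (1:ℝ) = Real.exp 0 by simp]
  apply Real.exp_lt_exp.mpr
  apply div_neg_of_neg_of_pos _ hτ
  nlinarith [Nat.cast_nonneg (α := ℝ) m]

lemma summable_geo (τ : ℝ) (hτ : 0 < τ) (m : ℕ) : Summable (fun k : ℕ => q τ m ^ k) :=
  summable_geometric_of_lt_one (q_pos τ m).le (q_lt_one hτ m)

lemma exists_q_lt (τ : ℝ) (hτ : 0 < τ) {δ : ℝ} (hδ : 0 < δ) : ∃ M, q τ M < δ := by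
  obtain ⟨M, hM⟩ := exists_nat_gt (-(τ * Real.log δ))
  refine ⟨M, ?_⟩
  rw [q, ← Real.exp_log hδ]
  apply Real.exp_lt_exp.mpr
  rw [div_lt_iff₀ hτ]
  nlinarith [Nat.cast_nonneg (α := ℝ) M]

lemma summable_S (τ : ℝ) (hτ : 0 < τ) (r : ℕ) (ν : ℕ → ℝ) :
    Summable (fun k : ℕ => |∑ m ∈ range r, ν m * q τ m ^ k|) := by
  rw [summable_abs_iff]
  apply summable_sum
  intro m _
  exact (summable_geo τ hτ m).mul_left (ν m)

lemma summable_abs_sub {f g : ℕ → ℝ} (hf : Summable fun k => |f k|)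
    (hg : Summable fun k => |g k|) : Summable fun k => |f k - g k| := by
  apply Summable.of_nonneg_of_le (fun k => abs_nonneg _) (fun k => abs_sub _ _) (hf.add hg)

lemma tsum_abs_sub_le {f g h : ℕ → ℝ} (hfg : Summable fun k => |f k - g k|)
    (hgh : Summable fun k => |g k - h k|) :
    ∑' k, |f k - h k| ≤ (∑' k, |f k - g k|) + ∑' k, |g k - h k| := by
  have hsum : Summable fun k => |f k - g k| + |g k - h k| := hfg.add hgh
  have hle : ∀ k, |f k - h k| ≤ |f k - g k| + |g k - h k| := fun k => abs_sub_le _ _ _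
  have hfh : Summable fun k => |f k - h k| :=
    Summable.of_nonneg_of_le (fun k => abs_nonneg _) hle hsum
  calc ∑' k, |f k - h k| ≤ ∑' k, (|f k - g k| + |g k - h k|) := Summable.tsum_le_tsum hle hfh hsum
    _ = _ := Summable.tsum_add hfg hgh

def Good (τ : ℝ) (ψ : ℕ → ℝ) : Prop :=
  Summable (fun k => |ψ k|) ∧
  ∀ ε : ℝ, 0 < ε → ∃ r : ℕ, ∃ ν : ℕ → ℝ,
    ∑' k, |ψ k - ∑ m ∈ range r, ν m * q τ m ^ k| ≤ ε

lemma S_indicator (τ : ℝ) {r R : ℕ} (h : r ≤ R) (ν : ℕ → ℝ) (k : ℕ) :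
    ∑ m ∈ range R, (if m < r then ν m else 0) * q τ m ^ k
      = ∑ m ∈ range r, ν m * q τ m ^ k := by
  rw [← Finset.sum_subset (Finset.range_subset_range.mpr h)
    (fun m _ hm => by rw [if_neg (by simpa using hm), zero_mul])]
  exact Finset.sum_congr rfl fun m hm => by rw [if_pos (Finset.mem_range.mp hm)]

lemma good_zero (τ : ℝ) : Good τ (fun _ => 0) := by
  refine ⟨by simp [summable_zero], fun ε hε => ⟨0, fun _ => 0, ?_⟩⟩
  simp [hε.le]

lemma Good.add {τ : ℝ} (hτ : 0 < τ) {f g : ℕ → ℝ} (hf : Good τ f) (hg : Good τ g) :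
    Good τ (fun k => f k + g k) := by
  constructor
  · exact Summable.of_nonneg_of_le (fun k => abs_nonneg _) (fun k => abs_add_le _ _)
      (hf.1.add hg.1)
  intro ε hε
  obtain ⟨r1, ν1, h1⟩ := hf.2 (ε / 2) (by positivity)
  obtain ⟨r2, ν2, h2⟩ := hg.2 (ε / 2) (by positivity)
  refine ⟨max r1 r2, fun m => (if m < r1 then ν1 m else 0) + (if m < r2 then ν2 m else 0), ?_⟩
  have hk : ∀ k, ∑ m ∈ range (max r1 r2),
      ((if m < r1 then ν1 m else 0) + (if m < r2 then ν2 m else 0)) * q τ m ^ k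
      = (∑ m ∈ range r1, ν1 m * q τ m ^ k) + ∑ m ∈ range r2, ν2 m * q τ m ^ k := by
    intro k
    simp only [add_mul, Finset.sum_add_distrib]
    rw [S_indicator τ (le_max_left r1 r2), S_indicator τ (le_max_right r1 r2)]
  have hS1 := summable_S τ hτ r1 ν1
  have hS2 := summable_S τ hτ r2 ν2
  have hle : ∀ k, |f k + g k - ∑ m ∈ range (max r1 r2),
        ((if m < r1 then ν1 m else 0) + (if m < r2 then ν2 m else 0)) * q τ m ^ k|
      ≤ |f k - ∑ m ∈ range r1, ν1 m * q τ m ^ k|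
        + |g k - ∑ m ∈ range r2, ν2 m * q τ m ^ k| := by
    intro k
    rw [hk k]
    have : f k + g k - ((∑ m ∈ range r1, ν1 m * q τ m ^ k) + ∑ m ∈ range r2, ν2 m * q τ m ^ k)
        = (f k - ∑ m ∈ range r1, ν1 m * q τ m ^ k)
          + (g k - ∑ m ∈ range r2, ν2 m * q τ m ^ k) := by ring
    rw [this]
    exact abs_add_le _ _
  have hsm1 := summable_abs_sub hf.1 hS1
  have hsm2 := summable_abs_sub hg.1 hS2
  calc ∑' k, |f k + g k - ∑ m ∈ range (max r1 r2),
        ((if m < r1 then ν1 m else 0) + (if m < r2 then ν2 m else 0)) * q τ m ^ k|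
      ≤ ∑' k, (|f k - ∑ m ∈ range r1, ν1 m * q τ m ^ k|
        + |g k - ∑ m ∈ range r2, ν2 m * q τ m ^ k|) := by
        apply Summable.tsum_le_tsum hle _ (hsm1.add hsm2)
        exact Summable.of_nonneg_of_le (fun k => abs_nonneg _) hle (hsm1.add hsm2)
    _ = (∑' k, |f k - ∑ m ∈ range r1, ν1 m * q τ m ^ k|)
        + ∑' k, |g k - ∑ m ∈ range r2, ν2 m * q τ m ^ k| := Summable.tsum_add hsm1 hsm2
    _ ≤ ε / 2 + ε / 2 := add_le_add h1 h2
    _ = ε := by ring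

lemma Good.smul {τ : ℝ} {f : ℕ → ℝ} (c : ℝ) (hf : Good τ f) :
    Good τ (fun k => c * f k) := by
  constructor
  · simpa [abs_mul] using hf.1.mul_left |c|
  intro ε hε
  by_cases hc : c = 0
  · refine ⟨0, fun _ => 0, ?_⟩
    simp [hc, hε.le]
  have hac : 0 < |c| := abs_pos.mpr hc
  obtain ⟨r, ν, h⟩ := hf.2 (ε / |c|) (by positivity)
  refine ⟨r, fun m => c * ν m, ?_⟩
  have hk : ∀ k, |c * f k - ∑ m ∈ range r, c * ν m * q τ m ^ k|
      = |c| * |f k - ∑ m ∈ range r, ν m * q τ m ^ k| := by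
    intro k
    rw [← abs_mul]
    congr 1
    simp only [mul_sub, Finset.mul_sum, mul_assoc]
  calc ∑' k, |c * f k - ∑ m ∈ range r, c * ν m * q τ m ^ k|
      = ∑' k, |c| * |f k - ∑ m ∈ range r, ν m * q τ m ^ k| := by
        exact tsum_congr hk
    _ = |c| * ∑' k, |f k - ∑ m ∈ range r, ν m * q τ m ^ k| := tsum_mul_left
    _ ≤ |c| * (ε / |c|) := by
        apply mul_le_mul_of_nonneg_left h hac.le
    _ = ε := by field_simp

lemma Good.sub {τ : ℝ} (hτ : 0 < τ) {f g : ℕ → ℝ} (hf : Good τ f) (hg : Good τ g) :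
    Good τ (fun k => f k - g k) := by
  have h := Good.add hτ hf (Good.smul (-1) hg)
  simpa [neg_one_mul, sub_eq_add_neg] using h

lemma good_b (τ : ℝ) (hτ : 0 < τ) (M : ℕ) : Good τ (fun k => q τ M ^ k) := by
  constructor
  · rw [summable_abs_iff]; exact summable_geo τ hτ M
  intro ε hε
  refine ⟨M + 1, fun m => if m = M then 1 else 0, ?_⟩
  have : ∀ k, ∑ m ∈ range (M + 1), (if m = M then (1:ℝ) else 0) * q τ m ^ k = q τ M ^ k := by
    intro k
    rw [Finset.sum_eq_single M]
    · simp
    · intro m _ hm; simp [hm]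
    · intro h; exact absurd (Finset.self_mem_range_succ M) h
  simp only [this, sub_self, abs_zero, tsum_zero]
  exact hε.le

lemma good_sum (τ : ℝ) (hτ : 0 < τ) (f : ℕ → ℕ → ℝ) :
    ∀ (s : Finset ℕ), (∀ j ∈ s, Good τ (f j)) → Good τ (fun k => ∑ j ∈ s, f j k) := by
  intro s
  induction s using Finset.cons_induction with
  | empty => intro _; simpa using good_zero τ
  | cons a s ha ih =>
    intro h
    simp only [Finset.sum_cons]
    exact Good.add hτ (h a (by simp)) (ih fun j hj => h j (by simp [hj]))

noncomputable def δ (n k : ℕ) : ℝ := if k = n then 1 else 0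

lemma summable_delta (n : ℕ) : Summable (fun k => |δ n k|) := by
  have : (fun k => |δ n k|) = fun k => if k = n then (1:ℝ) else 0 := by
    funext k; by_cases h : k = n <;> simp [δ, h]
  rw [this]
  exact (hasSum_ite_eq n (1:ℝ)).summable

lemma sum_mul_delta (g : ℕ → ℝ) (s : Finset ℕ) (k : ℕ) :
    ∑ j ∈ s, g j * δ j k = if k ∈ s then g k else 0 := by
  rw [← Finset.sum_ite_eq s k g]
  exact Finset.sum_congr rfl fun j _ => by by_cases h : k = j <;> simp [δ, h]

lemma good_delta (τ : ℝ) (hτ : 0 < τ) : ∀ n, Good τ (δ n) := by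
  intro n
  induction n using Nat.strong_induction_on with
  | _ n IH =>
  refine ⟨summable_delta n, ?_⟩
  intro ε hε
  obtain ⟨M, hM⟩ := exists_q_lt τ hτ (show (0:ℝ) < min (1/2) (ε/4) by positivity)
  set Q := q τ M with hQdef
  have hQpos : 0 < Q := q_pos τ M
  have hQhalf : Q < 1/2 := lt_of_lt_of_le hM (min_le_left _ _)
  have hQeps : Q < ε/4 := lt_of_lt_of_le hM (min_le_right _ _)
  set χ : ℕ → ℝ := fun k => (1 / Q ^ n) * q τ M ^ k
    - ∑ j ∈ range n, (Q ^ j / Q ^ n) * δ j k with hχdef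
  have hχgood : Good τ χ :=
    Good.sub hτ (Good.smul _ (good_b τ hτ M))
      (good_sum τ hτ (fun j k => (Q ^ j / Q ^ n) * δ j k) (range n)
        (fun j hj => Good.smul _ (IH j (Finset.mem_range.mp hj))))
  -- pointwise formula
  have hQn : (Q : ℝ) ^ n ≠ 0 := pow_ne_zero n hQpos.ne'
  have hpt : ∀ k, |δ n k - χ k| = if n < k then Q ^ (k - n) else 0 := by
    intro k
    have hsum : ∑ j ∈ range n, (Q ^ j / Q ^ n) * δ j k
        = if k ∈ range n then Q ^ k / Q ^ n else 0 :=
      sum_mul_delta (fun j => Q ^ j / Q ^ n) (range n) k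
    rcases lt_trichotomy k n with h | h | h
    · have h0 : δ n k - χ k = 0 := by
        simp only [hχdef]
        rw [← hQdef, hsum, if_pos (Finset.mem_range.mpr h)]
        simp only [δ, if_neg (show ¬ k = n by omega)]
        field_simp
        ring
      rw [if_neg (by omega), h0, abs_zero]
    · have h0 : δ n k - χ k = 0 := by
        simp only [hχdef]
        rw [← hQdef, hsum, if_neg (show k ∉ range n by simp [h])]
        simp only [δ, if_pos h]
        rw [h]
        field_simp
        ring
      rw [if_neg (by omega), h0, abs_zero]
    · have hpow : Q ^ k = Q ^ (k - n) * Q ^ n := by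
        rw [← pow_add]; congr 1; omega
      have h0 : δ n k - χ k = -(Q ^ (k - n)) := by
        simp only [hχdef]
        rw [← hQdef, hsum, if_neg (show k ∉ range n by simp; omega)]
        simp only [δ, if_neg (show ¬ k = n by omega)]
        rw [hpow]
        field_simp
        ring
      rw [if_pos h, h0, abs_neg, abs_of_nonneg (pow_nonneg hQpos.le _)]
  -- tsum of the error
  set f : ℕ → ℝ := fun k => |δ n k - χ k| with hfdef
  have hshift : ∀ j, f (j + (n + 1)) = Q * Q ^ j := by
    intro j
    rw [hfdef]
    simp only [hpt (j + (n + 1)), if_pos (by omega : n < j + (n + 1))]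
    have : j + (n + 1) - n = j + 1 := by omega
    rw [this, pow_succ]
    ring
  have hsummable_shift : Summable (fun j => f (j + (n + 1))) := by
    simp only [hshift]
    exact (summable_geometric_of_lt_one hQpos.le
      (hQhalf.trans (by norm_num))).mul_left Q
  have hsf : Summable f := (summable_nat_add_iff (n + 1)).mp hsummable_shift
  have htsumf : ∑' k, f k ≤ ε / 2 := by
    rw [← Summable.sum_add_tsum_nat_add (n + 1) hsf]
    have h1 : ∑ i ∈ range (n + 1), f i = 0 := by
      apply Finset.sum_eq_zero
      intro i hi
      have hni : ¬ n < i := by simp only [Finset.mem_range] at hi; omega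
      show |δ n i - χ i| = 0
      rw [hpt i, if_neg hni]
    have h2 : ∑' j, f (j + (n + 1)) = Q * (1 - Q)⁻¹ := by
      simp only [hshift]
      rw [tsum_mul_left, tsum_geometric_of_lt_one hQpos.le (hQhalf.trans (by norm_num))]
    rw [h1, h2, zero_add]
    have hQ1 : (1 - Q)⁻¹ ≤ 2 := by
      rw [inv_le_comm₀ (by linarith) (by norm_num)]
      linarith
    calc Q * (1 - Q)⁻¹ ≤ Q * 2 := by
          apply mul_le_mul_of_nonneg_left hQ1 hQpos.le
      _ ≤ ε / 2 := by linarith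
  -- combine
  obtain ⟨r, ν, hν⟩ := hχgood.2 (ε / 2) (by positivity)
  refine ⟨r, ν, ?_⟩
  have h1 : Summable fun k => |δ n k - χ k| := hsf
  have h2 : Summable fun k => |χ k - ∑ m ∈ range r, ν m * q τ m ^ k| :=
    summable_abs_sub hχgood.1 (summable_S τ hτ r ν)
  calc ∑' k, |δ n k - ∑ m ∈ range r, ν m * q τ m ^ k|
      ≤ (∑' k, |δ n k - χ k|) + ∑' k, |χ k - ∑ m ∈ range r, ν m * q τ m ^ k| :=
        tsum_abs_sub_le h1 h2
    _ ≤ ε / 2 + ε / 2 := add_le_add htsumf hν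
    _ = ε := by ring

lemma good_phi (τ : ℝ) (hτ : 0 < τ) (φ : ℕ → ℝ) (hφ : Summable fun k => |φ k|) :
    ∀ ε : ℝ, 0 < ε → ∃ r : ℕ, ∃ ν : ℕ → ℝ,
      ∑' k, |φ k - ∑ m ∈ range r, ν m * q τ m ^ k| ≤ ε := by
  intro ε hε
  -- choose N with tail small
  have htail : Filter.Tendsto (fun i => ∑' k, |φ (k + i)|) Filter.atTop (nhds 0) :=
    tendsto_sum_nat_add (fun k => |φ k|)
  obtain ⟨N, hN⟩ := (htail.eventually_lt_const (show (0:ℝ) < ε/2 by positivity)).exists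
  set χ : ℕ → ℝ := fun k => ∑ j ∈ range N, φ j * δ j k with hχdef
  have hχgood : Good τ χ :=
    good_sum τ hτ (fun j k => φ j * δ j k) (range N)
      (fun j _ => Good.smul _ (good_delta τ hτ j))
  have hχeq : ∀ k, χ k = if k < N then φ k else 0 := by
    intro k
    show ∑ j ∈ range N, φ j * δ j k = _
    rw [sum_mul_delta φ (range N) k]
    simp [Finset.mem_range]
  have hpt : ∀ k, |φ k - χ k| = if k < N then 0 else |φ k| := by
    intro k
    rw [hχeq k]
    by_cases h : k < N <;> simp [h]
  set f : ℕ → ℝ := fun k => |φ k - χ k| with hfdef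
  have hsf : Summable f := by
    apply Summable.of_nonneg_of_le (fun k => abs_nonneg _) _ hφ
    intro k
    show |φ k - χ k| ≤ |φ k|
    rw [hpt k]
    by_cases h : k < N <;> simp [h, abs_nonneg]
  have htsumf : ∑' k, f k ≤ ε / 2 := by
    rw [← Summable.sum_add_tsum_nat_add N hsf]
    have h1 : ∑ i ∈ range N, f i = 0 := by
      apply Finset.sum_eq_zero
      intro i hi
      show |φ i - χ i| = 0
      rw [hpt i, if_pos (Finset.mem_range.mp hi)]
    have h2 : ∑' j, f (j + N) = ∑' j, |φ (j + N)| := by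
      apply tsum_congr
      intro j
      show |φ (j + N) - χ (j + N)| = |φ (j + N)|
      rw [hpt (j + N), if_neg (by omega)]
    rw [h1, h2, zero_add]
    exact hN.le
  obtain ⟨r, ν, hν⟩ := hχgood.2 (ε / 2) (by positivity)
  refine ⟨r, ν, ?_⟩
  have h2 : Summable fun k => |χ k - ∑ m ∈ range r, ν m * q τ m ^ k| :=
    summable_abs_sub hχgood.1 (summable_S τ hτ r ν)
  calc ∑' k, |φ k - ∑ m ∈ range r, ν m * q τ m ^ k|
      ≤ (∑' k, |φ k - χ k|) + ∑' k, |χ k - ∑ m ∈ range r, ν m * q τ m ^ k| :=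
        tsum_abs_sub_le hsf h2
    _ ≤ ε / 2 + ε / 2 := add_le_add htsumf hν
    _ = ε := by ring

lemma exp_eq (τ : ℝ) (i k : ℕ) :
    Real.exp (-((2 * ((i:ℝ) + 1) + 1) * k) / τ) = q τ i ^ k := by
  rw [q, ← Real.exp_nat_mul]
  congr 1
  ring

end Stmt6Aux

/-- ℓ¹-density of odd exponential polynomials: for any absolutely summable real sequence `φ`,
any `τ > 0` and any `ε > 0`, there are `r ≥ 1` and coefficients `ν_1, …, ν_r` with
`Σ_k |φ_k − Σ_{m=1}^r ν_m e^{−(2m+1)k/τ}| ≤ ε`. -/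
theorem stmt6 (τ : ℝ) (hτ : 0 < τ) (φ : ℕ → ℝ) (hφ : Summable (fun k => |φ k|))
    (ε : ℝ) (hε : 0 < ε) :
    ∃ r : ℕ, 0 < r ∧ ∃ ν : Fin r → ℝ,
      ∑' k : ℕ,
        |φ k - ∑ m : Fin r, ν m * Real.exp (-((2 * (((m : ℕ) : ℝ) + 1) + 1) * (k : ℝ)) / τ)| ≤ ε := by
  obtain ⟨r, ν, hν⟩ := Stmt6Aux.good_phi τ hτ φ hφ ε hε
  refine ⟨r + 1, Nat.succ_pos r, fun m => if (m : ℕ) < r then ν m else 0, ?_⟩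
  have hk : ∀ k : ℕ,
      (∑ m : Fin (r+1), (if (m:ℕ) < r then ν m else 0)
          * Real.exp (-((2 * (((m:ℕ):ℝ) + 1) + 1) * (k:ℝ)) / τ))
        = ∑ m ∈ Finset.range r, ν m * Stmt6Aux.q τ m ^ k := by
    intro k
    rw [Fin.sum_univ_eq_sum_range
      (fun i => (if i < r then ν i else 0) * Real.exp (-((2 * ((i:ℝ) + 1) + 1) * (k:ℝ)) / τ))]
    rw [← Stmt6Aux.S_indicator τ (Nat.le_succ r) ν k]
    exact Finset.sum_congr rfl fun i _ => by rw [Stmt6Aux.exp_eq]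
  calc ∑' k : ℕ, |φ k - ∑ m : Fin (r+1), (if (m:ℕ) < r then ν m else 0)
          * Real.exp (-((2 * (((m:ℕ):ℝ) + 1) + 1) * (k:ℝ)) / τ)|
      = ∑' k, |φ k - ∑ m ∈ Finset.range r, ν m * Stmt6Aux.q τ m ^ k| := by
        exact tsum_congr fun k => by rw [hk k]
    _ ≤ ε := hν
end

section
/- Let (A_k)_{k≥1} be d×d real matrices with nonnegative entries such that ρ(Σ_{k=1}^∞ A_k) < 1 and such that A_k ≼ C e^{−βk} for all k ≥ 1, for some nonnegative matrix C and some β > 0. Define B_k = Σ_{n=1}^∞ (A^{*n})_k and U_t = Σ_{k=t}^∞ A_k. Then there exist δ ∈ (0, β) and a nonnegative d×d matrix C′ such that Σ_{k=1}^∞ e^{δk} B_k is finite entrywise and, for all t ≥ 1, Σ_{k=1}^{t−1} B_k U_{t−k} ≼ C′ e^{−δt} entrywise. -/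
/-- Convolution of two sequences of matrices: `(a*b)_t = Σ_{k=1}^{t-1} a_k b_{t-k}`. -/
noncomputable def matConv {d : ℕ} (a b : ℕ → Matrix (Fin d) (Fin d) ℝ) (t : ℕ) :
    Matrix (Fin d) (Fin d) ℝ :=
  ∑ k ∈ Finset.Ioo 0 t, a k * b (t - k)

/-- `matConvPow a n` is the `(n+1)`-fold convolution power `a^{*(n+1)}`. -/
noncomputable def matConvPow {d : ℕ} (a : ℕ → Matrix (Fin d) (Fin d) ℝ) :
    ℕ → ℕ → Matrix (Fin d) (Fin d) ℝ
  | 0 => a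
  | n + 1 => matConv a (matConvPow a n)

namespace Stmt7Aux
open Finset
variable {d : ℕ}

/-- entrywise sum of absolute values; a submultiplicative "norm" avoiding instances -/
noncomputable def NN (X : Matrix (Fin d) (Fin d) ℝ) : ℝ := ∑ i, ∑ j, |X i j|

lemma NN_nonneg (X : Matrix (Fin d) (Fin d) ℝ) : 0 ≤ NN X :=
  Finset.sum_nonneg fun _ _ => Finset.sum_nonneg fun _ _ => abs_nonneg _

lemma abs_entry_le_NN (X : Matrix (Fin d) (Fin d) ℝ) (i j : Fin d) : |X i j| ≤ NN X := by
  have h1 : |X i j| ≤ ∑ j', |X i j'| :=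
    Finset.single_le_sum (f := fun j' => |X i j'|) (fun _ _ => abs_nonneg _) (Finset.mem_univ j)
  exact h1.trans (Finset.single_le_sum (f := fun i' => ∑ j', |X i' j'|)
    (fun _ _ => Finset.sum_nonneg fun _ _ => abs_nonneg _) (Finset.mem_univ i))

lemma NN_submul (X Y : Matrix (Fin d) (Fin d) ℝ) : NN (X * Y) ≤ NN X * NN Y := by
  have h1 : NN (X * Y) ≤ ∑ l, (∑ i, |X i l|) * (∑ j, |Y l j|) := by
    unfold NN
    calc ∑ i, ∑ j, |(X * Y) i j| ≤ ∑ i, ∑ j, ∑ l, |X i l| * |Y l j| := by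
          refine Finset.sum_le_sum fun i _ => Finset.sum_le_sum fun j _ => ?_
          rw [Matrix.mul_apply]
          refine (Finset.abs_sum_le_sum_abs _ _).trans ?_
          refine Finset.sum_le_sum fun l _ => ?_
          rw [abs_mul]
      _ = ∑ i, ∑ l, ∑ j : Fin d, |X i l| * |Y l j| :=
          Finset.sum_congr rfl fun i _ => Finset.sum_comm
      _ = ∑ l, ∑ i, ∑ j : Fin d, |X i l| * |Y l j| := Finset.sum_comm
      _ = ∑ l, (∑ i, |X i l|) * (∑ j, |Y l j|) := by
          refine Finset.sum_congr rfl fun l _ => ?_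
          rw [Finset.sum_mul]
          refine Finset.sum_congr rfl fun i _ => ?_
          rw [Finset.mul_sum]
  refine h1.trans ?_
  have h2 : ∀ l, (∑ i, |X i l|) * (∑ j, |Y l j|) ≤ (∑ i, |X i l|) * NN Y := by
    intro l
    refine mul_le_mul_of_nonneg_left ?_ (Finset.sum_nonneg fun _ _ => abs_nonneg _)
    unfold NN
    exact Finset.single_le_sum (f := fun l' => ∑ j, |Y l' j|)
      (fun _ _ => Finset.sum_nonneg fun _ _ => abs_nonneg _) (Finset.mem_univ l)
  refine (Finset.sum_le_sum fun l _ => h2 l).trans ?_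
  rw [← Finset.sum_mul]
  refine mul_le_mul_of_nonneg_right ?_ (NN_nonneg Y)
  unfold NN
  rw [Finset.sum_comm]

lemma NN_one_le : NN (1 : Matrix (Fin d) (Fin d) ℝ) ≤ d := by
  unfold NN
  have : ∀ i : Fin d, ∑ j, |(1 : Matrix (Fin d) (Fin d) ℝ) i j| = 1 := by
    intro i
    have : ∀ j, |(1 : Matrix (Fin d) (Fin d) ℝ) i j| = if i = j then (1:ℝ) else 0 := by
      intro j; rw [Matrix.one_apply]; split <;> simp
    simp only [this]
    simp
  simp only [this]
  simp

lemma NN_mono {X Y : Matrix (Fin d) (Fin d) ℝ} (hX : ∀ i j, 0 ≤ X i j)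
    (hXY : ∀ i j, X i j ≤ Y i j) : NN X ≤ NN Y := by
  refine Finset.sum_le_sum fun i _ => Finset.sum_le_sum fun j _ => ?_
  rw [abs_of_nonneg (hX i j)]
  exact (hXY i j).trans (le_abs_self _)

lemma entry_pow_nonneg {X : Matrix (Fin d) (Fin d) ℝ} (hX : ∀ i j, 0 ≤ X i j) :
    ∀ n i j, 0 ≤ (X ^ n) i j := by
  intro n
  induction n with
  | zero => intro i j; rw [pow_zero, Matrix.one_apply]; split <;> norm_num
  | succ n ih =>
      intro i j
      rw [pow_succ', Matrix.mul_apply]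
      exact Finset.sum_nonneg fun l _ => mul_nonneg (hX i l) (ih l j)

lemma entry_pow_mono {X Y : Matrix (Fin d) (Fin d) ℝ} (hX : ∀ i j, 0 ≤ X i j)
    (hXY : ∀ i j, X i j ≤ Y i j) : ∀ n i j, (X ^ n) i j ≤ (Y ^ n) i j := by
  have hY : ∀ i j, 0 ≤ Y i j := fun i j => (hX i j).trans (hXY i j)
  intro n
  induction n with
  | zero => intro i j; rw [pow_zero, pow_zero]
  | succ n ih =>
      intro i j
      rw [pow_succ', pow_succ', Matrix.mul_apply, Matrix.mul_apply]
      refine Finset.sum_le_sum fun l _ => ?_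
      exact mul_le_mul (hXY i l) (ih l j) (entry_pow_nonneg hX n l j) (hY i l)

section Gelfand
attribute [local instance] Matrix.linftyOpNormedRing Matrix.linftyOpNormedAlgebra

lemma exists_pow_NN_lt (M : Matrix (Fin d) (Fin d) ℝ) (h : specRad M < 1) :
    ∃ m : ℕ, 0 < m ∧ NN (M ^ m) < 1 := by
  rcases Nat.eq_zero_or_pos d with hd | hd
  · refine ⟨1, one_pos, ?_⟩
    subst hd
    simp [NN]
  set Mc : Matrix (Fin d) (Fin d) ℂ := M.map Complex.ofReal with hMc
  have hpowmap : ∀ n : ℕ, (M ^ n).map Complex.ofReal = Mc ^ n := by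
    intro n
    have h2 : Complex.ofRealHom.mapMatrix (M ^ n) = (Complex.ofRealHom.mapMatrix M) ^ n :=
      map_pow _ _ _
    rw [RingHom.mapMatrix_apply, RingHom.mapMatrix_apply] at h2
    exact h2
  have hNNle : ∀ X : Matrix (Fin d) (Fin d) ℂ, (∑ i, ∑ j, ‖X i j‖) ≤ d * ‖X‖ := by
    intro X
    have hrow : ∀ i, ∑ j, ‖X i j‖ ≤ ‖X‖ := by
      intro i
      have h1 : (∑ j, ‖X i j‖₊) ≤ ‖X‖₊ := by
        rw [Matrix.linfty_opNNNorm_def]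
        exact Finset.le_sup (f := fun i => ∑ j, ‖X i j‖₊) (Finset.mem_univ i)
      calc ∑ j, ‖X i j‖ = ((∑ j, ‖X i j‖₊ : NNReal) : ℝ) := by push_cast; rfl
        _ ≤ (‖X‖₊ : ℝ) := by exact_mod_cast h1
    calc (∑ i, ∑ j, ‖X i j‖) ≤ ∑ _i : Fin d, ‖X‖ := Finset.sum_le_sum fun i _ => hrow i
      _ = d * ‖X‖ := by rw [Finset.sum_const, card_univ, Fintype.card_fin, nsmul_eq_mul]
  have hNN_of : ∀ n : ℕ, NN (M ^ n) ≤ d * ‖Mc ^ n‖ := by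
    intro n
    have : NN (M ^ n) = ∑ i, ∑ j, ‖(Mc ^ n) i j‖ := by
      unfold NN
      refine Finset.sum_congr rfl fun i _ => Finset.sum_congr rfl fun j _ => ?_
      rw [← hpowmap n]
      simp [Matrix.map_apply, Complex.norm_real]
    rw [this]
    exact hNNle _
  have htend := spectrum.pow_nnnorm_pow_one_div_tendsto_nhds_spectralRadius Mc
  have hev : ∀ᶠ n : ℕ in Filter.atTop,
      (↑‖Mc ^ n‖₊ : ENNReal) ^ (1 / (n : ℝ)) < 1 := htend.eventually_lt_const h
  obtain ⟨n, hnlt, hn1⟩ := (hev.and (Filter.eventually_ge_atTop 1)).exists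
  have hn : ‖Mc ^ n‖₊ < 1 := by
    by_contra hcon
    push_neg at hcon
    have h2 : (1:ENNReal) ≤ (↑‖Mc ^ n‖₊ : ENNReal) ^ (1 / (n : ℝ)) := by
      calc (1:ENNReal) = (1:ENNReal) ^ (1 / (n : ℝ)) := (ENNReal.one_rpow _).symm
        _ ≤ _ := ENNReal.rpow_le_rpow (by exact_mod_cast hcon) (by positivity)
    exact absurd hnlt (not_lt.mpr h2)
  have hnR : ‖Mc ^ n‖ < 1 := hn
  obtain ⟨q, hq⟩ := exists_pow_lt_of_lt_one (x := ((d : ℝ) + 1)⁻¹) (by positivity) hnR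
  have hq0 : 0 < q := by
    rcases Nat.eq_zero_or_pos q with h0 | h0
    · exfalso
      rw [h0, pow_zero] at hq
      have : ((d:ℝ) + 1)⁻¹ ≤ 1 := by
        rw [inv_le_one_iff₀]
        right
        have : (1:ℝ) ≤ d := by exact_mod_cast hd
        linarith
      linarith
    · exact h0
  refine ⟨n * q, Nat.mul_pos hn1 hq0, ?_⟩
  have hb : ‖Mc ^ (n * q)‖ ≤ ‖Mc ^ n‖ ^ q := by
    rw [pow_mul]
    exact norm_pow_le' _ hq0
  have hfin : NN (M ^ (n * q)) ≤ d * (‖Mc ^ n‖ ^ q) :=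
    (hNN_of _).trans (mul_le_mul_of_nonneg_left hb (by positivity))
  refine hfin.trans_lt ?_
  have hlt : (d:ℝ) * (‖Mc ^ n‖ ^ q) < d * ((d : ℝ) + 1)⁻¹ := by
    refine mul_lt_mul_of_pos_left hq ?_
    exact_mod_cast hd
  refine hlt.trans_le ?_
  rw [mul_inv_le_iff₀ (by positivity), one_mul]
  linarith

end Gelfand

lemma summable_NN_pow (F : Matrix (Fin d) (Fin d) ℝ) {m : ℕ} (hm : 0 < m)
    (hc : NN (F ^ m) < 1) : Summable fun n : ℕ => NN (F ^ n) := by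
  set c₂ : ℝ := max (NN (F ^ m)) (1/2) with hc₂
  have hc₂1 : c₂ < 1 := max_lt hc (by norm_num)
  have hc₂0 : (0:ℝ) < c₂ := lt_of_lt_of_le (by norm_num) (le_max_right _ _)
  have hcle : NN (F ^ m) ≤ c₂ := le_max_left _ _
  set ρ : ℝ := c₂ ^ ((m : ℝ))⁻¹ with hρdef
  have hρ0 : 0 < ρ := Real.rpow_pos_of_pos hc₂0 _
  have hρ1 : ρ < 1 := Real.rpow_lt_one hc₂0.le hc₂1 (by positivity)
  have hρm : ρ ^ m = c₂ := by
    rw [hρdef, ← Real.rpow_natCast (c₂ ^ ((m:ℝ))⁻¹) m, ← Real.rpow_mul hc₂0.le,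
      inv_mul_cancel₀ (by exact_mod_cast hm.ne'), Real.rpow_one]
  set KS : ℝ := d * (1 + NN F) ^ m with hKSdef
  have h1F : (1:ℝ) ≤ 1 + NN F := by have := NN_nonneg F; linarith
  have hKS : ∀ s, s ≤ m → NN (F ^ s) ≤ KS := by
    have hpow1 : ∀ s, NN (F ^ s) ≤ d * (1 + NN F) ^ s := by
      intro s
      induction s with
      | zero => rw [pow_zero, pow_zero, mul_one]; exact NN_one_le
      | succ s ih =>
          rw [pow_succ']
          refine (NN_submul _ _).trans ?_
          have := mul_le_mul (by linarith : NN F ≤ 1 + NN F) ih (NN_nonneg _) (by linarith)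
          refine this.trans (le_of_eq ?_)
          ring
    intro s hs
    refine (hpow1 s).trans ?_
    rw [hKSdef]
    refine mul_le_mul_of_nonneg_left ?_ (by positivity)
    exact pow_le_pow_right₀ h1F hs
  have hmain : ∀ q s, NN (F ^ (m * q + s)) ≤ c₂ ^ q * NN (F ^ s) := by
    intro q
    induction q with
    | zero => intro s; simp
    | succ q ih =>
        intro s
        have he : m * (q + 1) + s = m + (m * q + s) := by ring
        rw [he, pow_add]
        refine (NN_submul _ _).trans ?_
        have := mul_le_mul hcle (ih s) (NN_nonneg _) hc₂0.le
        refine this.trans (le_of_eq ?_)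
        ring
  have hbound : ∀ n, NN (F ^ n) ≤ (KS / ρ ^ m) * ρ ^ n := by
    intro n
    have hdm := Nat.div_add_mod n m
    have h1 : NN (F ^ n) ≤ c₂ ^ (n / m) * KS := by
      calc NN (F ^ n) = NN (F ^ (m * (n/m) + n % m)) := by rw [hdm]
        _ ≤ c₂ ^ (n/m) * NN (F ^ (n % m)) := hmain _ _
        _ ≤ c₂ ^ (n/m) * KS :=
            mul_le_mul_of_nonneg_left (hKS _ (Nat.mod_lt n hm).le) (by positivity)
    refine h1.trans ?_
    rw [div_mul_eq_mul_div, mul_comm (c₂ ^ (n/m)) KS, mul_div_assoc]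
    refine mul_le_mul_of_nonneg_left ?_ (by positivity)
    rw [← hρm, ← pow_mul, le_div_iff₀ (by positivity), ← pow_add]
    refine pow_le_pow_of_le_one hρ0.le hρ1.le ?_
    have h2 := Nat.mod_lt n hm
    omega
  refine Summable.of_nonneg_of_le (fun n => NN_nonneg _) hbound ?_
  exact (summable_geometric_of_lt_one hρ0.le hρ1).mul_left _

lemma continuous_NN_pow (M C : Matrix (Fin d) (Fin d) ℝ) (m : ℕ) :
    Continuous fun t : ℝ => NN ((M + t • C) ^ m) := by
  have h : ∀ n (i j : Fin d), Continuous fun t : ℝ => ((M + t • C) ^ n) i j := by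
    intro n
    induction n with
    | zero =>
        intro i j
        simp only [pow_zero]
        exact continuous_const
    | succ n ih =>
        intro i j
        have he : ∀ t : ℝ, ((M + t • C) ^ (n+1)) i j
            = ∑ l, ((M + t • C) ^ n) i l * (M l j + t * C l j) := by
          intro t
          rw [pow_succ, Matrix.mul_apply]
          refine Finset.sum_congr rfl fun l _ => ?_
          simp [Matrix.add_apply, Matrix.smul_apply, smul_eq_mul]
        simp only [he]
        exact continuous_finset_sum _ fun l _ =>
          (ih i l).mul ((continuous_const).add ((continuous_id).mul continuous_const))
  unfold NN
  exact continuous_finset_sum _ fun i _ => continuous_finset_sum _ fun j _ => (h m i j).abs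

lemma matConv_apply (a b : ℕ → Matrix (Fin d) (Fin d) ℝ) (t : ℕ) (i j : Fin d) :
    matConv a b t i j = ∑ k ∈ Finset.Ioo 0 t, ∑ l, a k i l * b (t - k) l j := by
  unfold matConv
  rw [Matrix.sum_apply]
  exact Finset.sum_congr rfl fun k _ => Matrix.mul_apply

end Stmt7Aux

/-- Exponentially dominated kernels: if the nonnegative matrices `(A_k)_{k≥1}` satisfy
`ρ(Σ A_k) < 1` and `A_k ≼ C e^{−βk}`, then with `B_k = Σ_{n≥1} (A^{*n})_k` and
`U_t = Σ_{k≥t} A_k`, there exist `δ ∈ (0, β)` and a nonnegative matrix `C'` such that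
`Σ_k e^{δk} B_k` is finite entrywise and `Σ_{k=1}^{t−1} B_k U_{t−k} ≼ C' e^{−δt}` for all
`t ≥ 1`.  The family `(A_k)_{k≥1}` is encoded with `A 0 = 0`. -/
theorem stmt7 {d : ℕ} (A : ℕ → Matrix (Fin d) (Fin d) ℝ)
    (hA0 : A 0 = 0) (hAnn : ∀ k i j, 0 ≤ A k i j) (hAsum : Summable A)
    (hρ : specRad (∑' k, A k) < 1)
    (β : ℝ) (hβ : 0 < β) (C : Matrix (Fin d) (Fin d) ℝ) (hC : ∀ i j, 0 ≤ C i j)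
    (hdom : ∀ k : ℕ, 1 ≤ k → ∀ i j, A k i j ≤ C i j * Real.exp (-β * k))
    (B : ℕ → Matrix (Fin d) (Fin d) ℝ) (hB : ∀ k, B k = ∑' n : ℕ, matConvPow A n k)
    (U : ℕ → Matrix (Fin d) (Fin d) ℝ) (hU : ∀ t, U t = ∑' k : ℕ, A (t + k)) :
    ∃ δ : ℝ, 0 < δ ∧ δ < β ∧ ∃ C' : Matrix (Fin d) (Fin d) ℝ, (∀ i j, 0 ≤ C' i j) ∧
      (∀ i j, Summable (fun k : ℕ => Real.exp (δ * k) * B k i j)) ∧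
      (∀ t : ℕ, 1 ≤ t → ∀ i j,
        (∑ k ∈ Finset.Ioo 0 t, B k * U (t - k)) i j ≤ C' i j * Real.exp (-δ * t)) := by
  classical
  open Finset Stmt7Aux in
  have hAe : ∀ (i j : Fin d), Summable fun k => A k i j :=
    fun i j => Pi.summable.mp (Pi.summable.mp hAsum i) j
  set M : Matrix (Fin d) (Fin d) ℝ := ∑' k, A k with hMdef
  have hMe : ∀ i j, M i j = ∑' k, A k i j := by
    intro i j
    rw [hMdef]
    exact (congrFun (tsum_apply (x := i) hAsum) j).trans (tsum_apply (Pi.summable.mp hAsum i))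
  obtain ⟨m, hm, hNM⟩ := Stmt7Aux.exists_pow_NN_lt M hρ
  set T : ℝ → ℝ := fun x => (1 - Real.exp (x - β))⁻¹ - (1 - Real.exp (-β))⁻¹ with hTdef
  have hT0 : T 0 = 0 := by simp [hTdef]
  have hexpβ : Real.exp (-β) < 1 := by rw [Real.exp_lt_one_iff]; linarith
  have hTc : ContinuousAt T 0 := by
    refine ContinuousAt.sub ?_ continuousAt_const
    refine ContinuousAt.inv₀ ?_ ?_
    · exact (continuous_const.sub
        ((Real.continuous_exp).comp (continuous_id.sub continuous_const))).continuousAt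
    · simp only [zero_sub]
      have : Real.exp (-β) < 1 := hexpβ
      intro hzero
      rw [sub_eq_zero] at hzero
      rw [← hzero] at this
      exact lt_irrefl _ this
  have hΦ : ContinuousAt (fun x : ℝ => Stmt7Aux.NN ((M + T x • C) ^ m)) 0 :=
    ((Stmt7Aux.continuous_NN_pow M C m).continuousAt).comp hTc
  have hΦ0 : Stmt7Aux.NN ((M + T 0 • C) ^ m) < 1 := by
    rw [hT0, zero_smul, add_zero]; exact hNM
  have hev : ∀ᶠ x in nhds (0:ℝ), Stmt7Aux.NN ((M + T x • C) ^ m) < 1 :=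
    hΦ.eventually_lt_const hΦ0
  obtain ⟨r, hr, hball⟩ := Metric.eventually_nhds_iff.mp hev
  set δ : ℝ := min (r/2) (β/2) with hδdef
  have hδ0 : 0 < δ := lt_min (by linarith) (by linarith)
  have hδβ : δ < β := lt_of_le_of_lt (min_le_right _ _) (by linarith)
  have hkey1 : Stmt7Aux.NN ((M + T δ • C) ^ m) < 1 := by
    refine hball ?_
    rw [Real.dist_eq, sub_zero, abs_of_pos hδ0]
    calc δ ≤ r/2 := min_le_left _ _
      _ < r := by linarith
  refine ⟨δ, hδ0, hδβ, ?_⟩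
  set r1 : ℝ := Real.exp (δ - β) with hr1def
  have hr10 : (0:ℝ) < r1 := Real.exp_pos _
  have hr11 : r1 < 1 := by rw [hr1def, Real.exp_lt_one_iff]; linarith
  set r0 : ℝ := Real.exp (-β) with hr0def
  have hr00 : (0:ℝ) < r0 := Real.exp_pos _
  have hr01 : r0 < 1 := hexpβ
  have hexp1 : ∀ k : ℕ, Real.exp (δ * k) * Real.exp (-β * k) = r1 ^ k := by
    intro k
    rw [hr1def, ← Real.exp_nat_mul, ← Real.exp_add]
    congr 1
    ring
  have hexp0 : ∀ k : ℕ, Real.exp (-β * k) = r0 ^ k := by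
    intro k
    rw [hr0def, ← Real.exp_nat_mul]
    congr 1
    ring
  have hAgeom : ∀ (i j : Fin d) (k : ℕ), Real.exp (δ * k) * A k i j ≤ C i j * r1 ^ k := by
    intro i j k
    rcases Nat.eq_zero_or_pos k with hk | hk
    · subst hk
      simp only [hA0]
      simp only [Matrix.zero_apply, mul_zero, pow_zero, mul_one]
      exact hC i j
    · have h1 := hdom k hk i j
      have h2 : Real.exp (δ*k) * A k i j ≤ Real.exp (δ*k) * (C i j * Real.exp (-β*k)) :=
        mul_le_mul_of_nonneg_left h1 (Real.exp_pos _).le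
      refine h2.trans (le_of_eq ?_)
      rw [← hexp1 k]
      ring
  have hFsum : ∀ i j, Summable fun k : ℕ => Real.exp (δ * k) * A k i j := by
    intro i j
    refine Summable.of_nonneg_of_le
      (fun k => mul_nonneg (Real.exp_pos _).le (hAnn k i j)) (hAgeom i j) ?_
    exact (summable_geometric_of_lt_one hr10.le hr11).mul_left _
  set F : Matrix (Fin d) (Fin d) ℝ :=
    Matrix.of (fun i j => ∑' k : ℕ, Real.exp (δ * k) * A k i j) with hFdef
  have hFeq : ∀ i j, F i j = ∑' k : ℕ, Real.exp (δ * k) * A k i j := fun i j => rfl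
  have hFnn : ∀ i j, 0 ≤ F i j :=
    fun i j => tsum_nonneg fun k => mul_nonneg (Real.exp_pos _).le (hAnn k i j)
  have hFle : ∀ i j, F i j ≤ (M + T δ • C) i j := by
    intro i j
    have hg1 : Summable fun k : ℕ => r1 ^ k := summable_geometric_of_lt_one hr10.le hr11
    have hg0 : Summable fun k : ℕ => r0 ^ k := summable_geometric_of_lt_one hr00.le hr01
    have hgsum : Summable fun k : ℕ => A k i j + C i j * (r1 ^ k - r0 ^ k) :=
      (hAe i j).add ((hg1.sub hg0).mul_left _)
    have hle : ∀ k : ℕ, Real.exp (δ * k) * A k i j ≤ A k i j + C i j * (r1 ^ k - r0 ^ k) := by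
      intro k
      rcases Nat.eq_zero_or_pos k with hk | hk
      · subst hk
        simp [hA0]
      · have h2 : (0:ℝ) ≤ Real.exp (δ*k) - 1 := by
          have hge : (1:ℝ) ≤ Real.exp (δ*k) := Real.one_le_exp (by positivity)
          linarith
        have h3 : (Real.exp (δ*k) - 1) * A k i j
            ≤ (Real.exp (δ*k) - 1) * (C i j * Real.exp (-β*k)) :=
          mul_le_mul_of_nonneg_left (hdom k hk i j) h2
        have h4 : (Real.exp (δ*k) - 1) * (C i j * Real.exp (-β*k))
            = C i j * (r1^k - r0^k) := by
          rw [← hexp1 k, ← hexp0 k]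
          ring
        have h5 : Real.exp (δ*k) * A k i j - A k i j = (Real.exp (δ*k) - 1) * A k i j := by ring
        linarith
    have hfinal := Summable.tsum_le_tsum hle (hFsum i j) hgsum
    rw [hFeq]
    refine hfinal.trans (le_of_eq ?_)
    rw [Summable.tsum_add (hAe i j) ((hg1.sub hg0).mul_left _), tsum_mul_left, Summable.tsum_sub hg1 hg0,
      tsum_geometric_of_lt_one hr10.le hr11, tsum_geometric_of_lt_one hr00.le hr01, ← hMe i j]
    simp only [Matrix.add_apply, Matrix.smul_apply, smul_eq_mul, hTdef, hr1def, hr0def]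
    ring
  have hNF : Stmt7Aux.NN (F ^ m) < 1 := by
    refine lt_of_le_of_lt ?_ hkey1
    exact Stmt7Aux.NN_mono (fun i j => Stmt7Aux.entry_pow_nonneg hFnn m i j)
      (Stmt7Aux.entry_pow_mono hFnn hFle m)
  have hNsum : Summable fun n : ℕ => Stmt7Aux.NN (F ^ n) := Stmt7Aux.summable_NN_pow F hm hNF
  have hFpow_nn : ∀ n (i j : Fin d), 0 ≤ (F ^ n) i j := Stmt7Aux.entry_pow_nonneg hFnn
  have hFpow_entry_le : ∀ n (i j : Fin d), (F ^ n) i j ≤ Stmt7Aux.NN (F ^ n) :=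
    fun n i j => (le_abs_self _).trans (Stmt7Aux.abs_entry_le_NN _ i j)
  have hDsum : ∀ i j, Summable fun n : ℕ => (F ^ (n+1)) i j := by
    intro i j
    refine Summable.of_nonneg_of_le (fun n => hFpow_nn _ i j)
      (fun n => hFpow_entry_le (n+1) i j) ?_
    exact hNsum.comp_injective (add_left_injective 1)
  set D : Matrix (Fin d) (Fin d) ℝ :=
    Matrix.of (fun i j => ∑' n : ℕ, (F ^ (n+1)) i j) with hDdef
  have hPnn : ∀ n k (i j : Fin d), 0 ≤ matConvPow A n k i j := by
    intro n
    induction n with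
    | zero => exact hAnn
    | succ n ih =>
        intro k i j
        show 0 ≤ matConv A (matConvPow A n) k i j
        rw [Stmt7Aux.matConv_apply]
        exact Finset.sum_nonneg fun u _ => Finset.sum_nonneg fun l _ =>
          mul_nonneg (hAnn u i l) (ih (k - u) l j)
  have hP0 : ∀ n k, k ≤ n → matConvPow A n k = 0 := by
    intro n
    induction n with
    | zero =>
        intro k hk
        interval_cases k
        exact hA0
    | succ n ih =>
        intro k hk
        show matConv A (matConvPow A n) k = 0
        unfold matConv
        refine Finset.sum_eq_zero fun u hu => ?_
        rw [Finset.mem_Ioo] at hu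
        rw [ih (k - u) (by omega), Matrix.mul_zero]
  have hsplit : ∀ k u : ℕ, u ≤ k →
      Real.exp (δ * k) = Real.exp (δ * u) * Real.exp (δ * ((k - u : ℕ) : ℝ)) := by
    intro k u hu
    rw [← Real.exp_add]
    congr 1
    rw [Nat.cast_sub hu]
    ring
  have hkey : ∀ n (N : ℕ) (i j : Fin d),
      (∑ k ∈ Finset.range N, Real.exp (δ * k) * matConvPow A n k i j) ≤ (F ^ (n+1)) i j := by
    intro n
    induction n with
    | zero =>
        intro N i j
        rw [pow_one, hFeq]
        exact Summable.sum_le_tsum (Finset.range N)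
          (fun k _ => mul_nonneg (Real.exp_pos _).le (hAnn k i j)) (hFsum i j)
    | succ n ih =>
        intro N i j
        calc ∑ k ∈ Finset.range N, Real.exp (δ*k) * matConvPow A (n+1) k i j
            = ∑ k ∈ Finset.range N, ∑ u ∈ Finset.Ioo 0 k, ∑ l,
                (Real.exp (δ*u) * A u i l)
                  * (Real.exp (δ*((k-u:ℕ):ℝ)) * matConvPow A n (k-u) l j) := by
              refine Finset.sum_congr rfl fun k _ => ?_
              rw [show matConvPow A (n+1) k = matConv A (matConvPow A n) k from rfl,
                Stmt7Aux.matConv_apply, Finset.mul_sum]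
              refine Finset.sum_congr rfl fun u hu => ?_
              rw [Finset.mul_sum]
              refine Finset.sum_congr rfl fun l _ => ?_
              rw [hsplit k u (le_of_lt (Finset.mem_Ioo.mp hu).2)]
              ring
          _ ≤ ∑ p ∈ Finset.range N ×ˢ Finset.range N, ∑ l,
                (Real.exp (δ*p.1) * A p.1 i l)
                  * (Real.exp (δ*(p.2:ℝ)) * matConvPow A n p.2 l j) := by
              rw [Finset.sum_sigma' (Finset.range N) (fun k => Finset.Ioo 0 k)]
              have hinj : ∀ p ∈ (Finset.range N).sigma (fun k => Finset.Ioo 0 k),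
                  ∀ p' ∈ (Finset.range N).sigma (fun k => Finset.Ioo 0 k),
                  (fun p : Σ _ : ℕ, ℕ => ((p.2, p.1 - p.2) : ℕ × ℕ)) p
                    = (fun p : Σ _ : ℕ, ℕ => ((p.2, p.1 - p.2) : ℕ × ℕ)) p' → p = p' := by
                rintro ⟨k, u⟩ hp ⟨k', u'⟩ hp' heq
                rw [Finset.mem_sigma, Finset.mem_range, Finset.mem_Ioo] at hp hp'
                simp only [Prod.mk.injEq] at heq
                obtain ⟨h1, h2⟩ := heq
                simp only at hp hp' h1 h2
                have hkk : k = k' := by omega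
                subst hkk
                subst h1
                rfl
              have himg := Finset.sum_image
                (s := (Finset.range N).sigma (fun k => Finset.Ioo 0 k))
                (g := fun p : Σ _ : ℕ, ℕ => ((p.2, p.1 - p.2) : ℕ × ℕ))
                (f := fun q : ℕ × ℕ => ∑ l, (Real.exp (δ*q.1) * A q.1 i l)
                  * (Real.exp (δ*(q.2:ℝ)) * matConvPow A n q.2 l j)) hinj
              calc ∑ x ∈ (Finset.range N).sigma (fun k => Finset.Ioo 0 k),
                    ∑ l, (Real.exp (δ*(x.snd:ℝ)) * A x.snd i l)
                      * (Real.exp (δ*((x.fst - x.snd : ℕ):ℝ)) * matConvPow A n (x.fst - x.snd) l j)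
                  = ∑ q ∈ ((Finset.range N).sigma (fun k => Finset.Ioo 0 k)).image
                      (fun p : Σ _ : ℕ, ℕ => ((p.2, p.1 - p.2) : ℕ × ℕ)),
                      ∑ l, (Real.exp (δ*(q.1:ℝ)) * A q.1 i l)
                        * (Real.exp (δ*(q.2:ℝ)) * matConvPow A n q.2 l j) := himg.symm
                _ ≤ ∑ p ∈ Finset.range N ×ˢ Finset.range N,
                      ∑ l, (Real.exp (δ*(p.1:ℝ)) * A p.1 i l)
                        * (Real.exp (δ*(p.2:ℝ)) * matConvPow A n p.2 l j) := by
                    refine Finset.sum_le_sum_of_subset_of_nonneg ?_ ?_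
                    · intro q hq
                      rw [Finset.mem_image] at hq
                      obtain ⟨p, hp, rfl⟩ := hq
                      rw [Finset.mem_sigma, Finset.mem_range, Finset.mem_Ioo] at hp
                      rw [Finset.mem_product, Finset.mem_range, Finset.mem_range]
                      constructor
                      · simp only; omega
                      · simp only; omega
                    · intro q _ _
                      exact Finset.sum_nonneg fun l _ =>
                        mul_nonneg (mul_nonneg (Real.exp_pos _).le (hAnn _ i l))
                          (mul_nonneg (Real.exp_pos _).le (hPnn n _ l j))
          _ = ∑ l, (∑ u ∈ Finset.range N, Real.exp (δ*u) * A u i l)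
                * (∑ s ∈ Finset.range N, Real.exp (δ*s) * matConvPow A n s l j) := by
              rw [Finset.sum_product]
              calc ∑ u ∈ Finset.range N, ∑ s ∈ Finset.range N, ∑ l,
                    (Real.exp (δ*u) * A u i l) * (Real.exp (δ*(s:ℝ)) * matConvPow A n s l j)
                  = ∑ u ∈ Finset.range N, ∑ l, ∑ s ∈ Finset.range N,
                    (Real.exp (δ*u) * A u i l) * (Real.exp (δ*(s:ℝ)) * matConvPow A n s l j) :=
                    Finset.sum_congr rfl fun u _ => Finset.sum_comm
                _ = ∑ l, ∑ u ∈ Finset.range N, ∑ s ∈ Finset.range N,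
                    (Real.exp (δ*u) * A u i l) * (Real.exp (δ*(s:ℝ)) * matConvPow A n s l j) :=
                    Finset.sum_comm
                _ = ∑ l, (∑ u ∈ Finset.range N, Real.exp (δ*u) * A u i l)
                    * (∑ s ∈ Finset.range N, Real.exp (δ*s) * matConvPow A n s l j) :=
                    Finset.sum_congr rfl fun l _ => (Finset.sum_mul_sum _ _ _ _).symm
          _ ≤ ∑ l, F i l * (F ^ (n+1)) l j := by
              refine Finset.sum_le_sum fun l _ => ?_
              refine mul_le_mul ?_ (ih N l j) ?_ (hFnn i l)
              · rw [hFeq]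
                exact Summable.sum_le_tsum (Finset.range N)
                  (fun k _ => mul_nonneg (Real.exp_pos _).le (hAnn k i l)) (hFsum i l)
              · exact Finset.sum_nonneg fun s _ =>
                  mul_nonneg (Real.exp_pos _).le (hPnn n s l j)
          _ = (F ^ (n+1+1)) i j := by
              rw [pow_succ' F (n+1), Matrix.mul_apply]
  have hBfin : ∀ k, B k = ∑ n ∈ Finset.range k, matConvPow A n k := by
    intro k
    rw [hB k]
    exact tsum_eq_sum fun n hn => hP0 n k (le_of_not_gt fun h => hn (Finset.mem_range.mpr h))
  have hBe : ∀ k (i j : Fin d), B k i j = ∑ n ∈ Finset.range k, matConvPow A n k i j := by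
    intro k i j
    rw [hBfin k, Matrix.sum_apply]
  have hBnn : ∀ k (i j : Fin d), 0 ≤ B k i j := by
    intro k i j
    rw [hBe]
    exact Finset.sum_nonneg fun n _ => hPnn n k i j
  have hBpartial : ∀ (N' : ℕ) (i j : Fin d),
      ∑ k ∈ Finset.range N', Real.exp (δ*k) * B k i j ≤ D i j := by
    intro N' i j
    have h1 : ∑ k ∈ Finset.range N', Real.exp (δ*k) * B k i j
        = ∑ k ∈ Finset.range N', ∑ n ∈ Finset.range k,
            Real.exp (δ*k) * matConvPow A n k i j := by
      refine Finset.sum_congr rfl fun k _ => ?_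
      rw [hBe, Finset.mul_sum]
    rw [h1]
    have h2 : ∑ k ∈ Finset.range N', ∑ n ∈ Finset.range k,
          Real.exp (δ*k) * matConvPow A n k i j
        ≤ ∑ k ∈ Finset.range N', ∑ n ∈ Finset.range N',
          Real.exp (δ*k) * matConvPow A n k i j := by
      refine Finset.sum_le_sum fun k hk => ?_
      refine Finset.sum_le_sum_of_subset_of_nonneg
        (Finset.range_subset_range.mpr (le_of_lt (Finset.mem_range.mp hk))) ?_
      intro n _ _
      exact mul_nonneg (Real.exp_pos _).le (hPnn n k i j)
    refine h2.trans ?_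
    rw [Finset.sum_comm]
    refine (Finset.sum_le_sum fun n _ => hkey n N' i j).trans ?_
    exact Summable.sum_le_tsum (Finset.range N') (fun n _ => hFpow_nn (n+1) i j) (hDsum i j)
  have hBsummable : ∀ i j, Summable fun k : ℕ => Real.exp (δ * k) * B k i j := by
    intro i j
    exact summable_of_sum_range_le
      (fun k => mul_nonneg (Real.exp_pos _).le (hBnn k i j)) (fun N' => hBpartial N' i j)
  set E : Matrix (Fin d) (Fin d) ℝ :=
    Matrix.of (fun i j => ∑' k : ℕ, Real.exp (δ * k) * B k i j) with hEdef
  have hEnn : ∀ i j, 0 ≤ E i j :=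
    fun i j => tsum_nonneg fun k => mul_nonneg (Real.exp_pos _).le (hBnn k i j)
  have hBleE : ∀ (k : ℕ) (i l : Fin d), Real.exp (δ * k) * B k i l ≤ E i l := fun k i l =>
    Summable.le_tsum (hBsummable i l) k fun j _ => mul_nonneg (Real.exp_pos _).le (hBnn j i l)
  set κ₁ : ℝ := (1 - r0)⁻¹ with hκ₁def
  have hκ₁0 : 0 ≤ κ₁ := by
    rw [hκ₁def]
    have : (0:ℝ) < 1 - r0 := by linarith
    positivity
  have hUsum : ∀ t : ℕ, Summable fun k : ℕ => A (t + k) :=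
    fun t => hAsum.comp_injective fun a b h => by omega
  have hUe : ∀ t (i j : Fin d), U t i j = ∑' k : ℕ, A (t + k) i j := by
    intro t i j
    rw [hU t]
    exact (congrFun (tsum_apply (x := i) (hUsum t)) j).trans (tsum_apply (Pi.summable.mp (hUsum t) i))
  have hUnn : ∀ t (i j : Fin d), 0 ≤ U t i j := by
    intro t i j
    rw [hUe]
    exact tsum_nonneg fun k => hAnn _ i j
  have hUleb : ∀ t : ℕ, 1 ≤ t → ∀ l j : Fin d,
      U t l j ≤ κ₁ * C l j * Real.exp (-β * t) := by
    intro t ht l j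
    rw [hUe]
    have hterm : ∀ k : ℕ, A (t+k) l j ≤ (C l j * Real.exp (-β*t)) * r0 ^ k := by
      intro k
      refine (hdom (t+k) (by omega) l j).trans (le_of_eq ?_)
      have hc : ((t + k : ℕ) : ℝ) = (t:ℝ) + k := by push_cast; ring
      rw [hc, ← hexp0 k, mul_assoc, ← Real.exp_add]
      congr 2
      ring
    have hs1 : Summable fun k : ℕ => A (t+k) l j :=
      Pi.summable.mp (Pi.summable.mp (hUsum t) l) j
    have hs2 : Summable fun k : ℕ => (C l j * Real.exp (-β*t)) * r0 ^ k :=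
      (summable_geometric_of_lt_one hr00.le hr01).mul_left _
    refine (Summable.tsum_le_tsum hterm hs1 hs2).trans (le_of_eq ?_)
    rw [tsum_mul_left, tsum_geometric_of_lt_one hr00.le hr01]
    rw [hκ₁def]
    ring
  set r2 : ℝ := Real.exp (-(β - δ)) with hr2def
  have hr20 : (0:ℝ) < r2 := Real.exp_pos _
  have hr21 : r2 < 1 := by rw [hr2def, Real.exp_lt_one_iff]; linarith
  set κ₂ : ℝ := (1 - r2)⁻¹ with hκ₂def
  have hκ₂0 : 0 ≤ κ₂ := by
    rw [hκ₂def]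
    have : (0:ℝ) < 1 - r2 := by linarith
    positivity
  set S : Matrix (Fin d) (Fin d) ℝ := Matrix.of (fun i j => ∑ l, E i l * C l j) with hSdef
  have hSnn : ∀ i j, 0 ≤ S i j := by
    intro i j
    rw [hSdef]
    simp only [Matrix.of_apply]
    exact Finset.sum_nonneg fun l _ => mul_nonneg (hEnn i l) (hC l j)
  set C' : Matrix (Fin d) (Fin d) ℝ := Matrix.of (fun i j => κ₁ * κ₂ * S i j) with hC'def
  refine ⟨C', fun i j => mul_nonneg (mul_nonneg hκ₁0 hκ₂0) (hSnn i j), hBsummable, ?_⟩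
  intro t ht i j
  have hL : (∑ k ∈ Finset.Ioo 0 t, B k * U (t - k)) i j
      = ∑ k ∈ Finset.Ioo 0 t, ∑ l, B k i l * U (t-k) l j := by
    rw [Matrix.sum_apply]
    exact Finset.sum_congr rfl fun k _ => Matrix.mul_apply
  rw [hL]
  have hstep : ∀ k ∈ Finset.Ioo 0 t, ∑ l, B k i l * U (t-k) l j
      ≤ ((κ₁ * S i j) * Real.exp (-δ * t)) * r2 ^ (t - k) := by
    intro k hk
    rw [Finset.mem_Ioo] at hk
    have hk1 : 1 ≤ t - k := by omega
    have hcast : ((t - k : ℕ) : ℝ) = (t:ℝ) - k := by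
      rw [Nat.cast_sub hk.2.le]
    have hterm : ∀ l, B k i l * U (t-k) l j
        ≤ ((Real.exp (δ*k))⁻¹ * E i l) * (κ₁ * C l j * Real.exp (-β * ((t-k:ℕ):ℝ))) := by
      intro l
      refine mul_le_mul ?_ (hUleb (t-k) hk1 l j) (hUnn _ l j)
        (mul_nonneg (by positivity) (hEnn i l))
      have h2 : B k i l = (Real.exp (δ*k))⁻¹ * (Real.exp (δ*k) * B k i l) := by
        field_simp
      rw [h2]
      exact mul_le_mul_of_nonneg_left (hBleE k i l) (by positivity)
    refine (Finset.sum_le_sum fun l _ => hterm l).trans (le_of_eq ?_)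
    have e1 : (Real.exp (δ*(k:ℝ)))⁻¹ = Real.exp (-(δ*k)) := (Real.exp_neg _).symm
    have e2 : r2 ^ (t-k) = Real.exp (-(β-δ) * ((t-k:ℕ):ℝ)) := by
      rw [hr2def, ← Real.exp_nat_mul]
      congr 1
      ring
    have e3 : Real.exp (-(δ*k)) * Real.exp (-β * ((t-k:ℕ):ℝ))
        = Real.exp (-δ*t) * Real.exp (-(β-δ) * ((t-k:ℕ):ℝ)) := by
      rw [← Real.exp_add, ← Real.exp_add]
      congr 1
      rw [hcast]
      ring
    calc ∑ l, ((Real.exp (δ*(k:ℝ)))⁻¹ * E i l) * (κ₁ * C l j * Real.exp (-β*((t-k:ℕ):ℝ)))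
        = (Real.exp (-(δ*k)) * Real.exp (-β*((t-k:ℕ):ℝ))) * κ₁ * ∑ l, E i l * C l j := by
          rw [Finset.mul_sum]
          exact Finset.sum_congr rfl fun l _ => by rw [← e1]; ring
      _ = ((κ₁ * S i j) * Real.exp (-δ * t)) * r2 ^ (t-k) := by
          rw [e3, e2, hSdef]
          simp only [Matrix.of_apply]
          ring
  refine (Finset.sum_le_sum hstep).trans ?_
  rw [← Finset.mul_sum]
  have hre : ∑ k ∈ Finset.Ioo 0 t, r2 ^ (t-k) = ∑ k ∈ Finset.Ioo 0 t, r2 ^ k := by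
    refine Finset.sum_nbij' (fun k => t - k) (fun k => t - k) ?_ ?_ ?_ ?_ ?_
    · intro a ha; simp only [Finset.mem_Ioo] at ha ⊢; omega
    · intro a ha; simp only [Finset.mem_Ioo] at ha ⊢; omega
    · intro a ha; simp only [Finset.mem_Ioo] at ha; omega
    · intro a ha; simp only [Finset.mem_Ioo] at ha; omega
    · intro a _; rfl
  have hsum2 : ∑ k ∈ Finset.Ioo 0 t, r2 ^ (t-k) ≤ κ₂ := by
    rw [hre]
    refine (Summable.sum_le_tsum (Finset.Ioo 0 t) (fun k _ => by positivity)
      (summable_geometric_of_lt_one hr20.le hr21)).trans ?_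
    rw [tsum_geometric_of_lt_one hr20.le hr21]
  have hCoef : 0 ≤ (κ₁ * S i j) * Real.exp (-δ * t) :=
    mul_nonneg (mul_nonneg hκ₁0 (hSnn i j)) (Real.exp_pos _).le
  refine (mul_le_mul_of_nonneg_left hsum2 hCoef).trans (le_of_eq ?_)
  rw [hC'def]
  simp only [Matrix.of_apply]
  ring
end

section
/- Let β > 0 and let (A_k)_{k≥1} be d×d real matrices with nonnegative entries such that ρ(Σ_{k=1}^∞ A_k) < 1 and A_k ≼ C k^{−2(1+β)} for all k ≥ 1, for some nonnegative matrix C. Define B_k = Σ_{n=1}^∞ (A^{*n})_k and U_t = Σ_{k=t}^∞ A_k. Then: (i) there is a nonnegative matrix C₁ with U_t ≼ C₁ t^{−(1+2β)} for all t ≥ 1; (ii) Σ_{k=1}^∞ k B_k is finite entrywise; and (iii) there is a nonnegative matrix C₂ such that Σ_{k=1}^{t−1} B_k U_{t−k} ≼ C₂ / t entrywise for all t ≥ 1. -/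
lemma bern_step {q : ℝ} (hq : 1 ≤ q) {x : ℝ} (hx : 2 ≤ x) :
    q * x ^ (-(q+1)) ≤ (x-1) ^ (-q) - x ^ (-q) := by
  have hx0 : (0:ℝ) < x := by linarith
  have hx1 : (0:ℝ) < x - 1 := by linarith
  have h1 : x ^ (-(q+1)) = x ^ (-q) * x⁻¹ := by
    rw [show -(q+1) = -q + (-1) by ring, Real.rpow_add hx0, Real.rpow_neg_one]
  have hs : (0:ℝ) ≤ 1/(x-1) := by positivity
  have key : 1 + q / x ≤ (x / (x-1)) ^ q := by
    have hb : 1 + q * (1/(x-1)) ≤ (1 + 1/(x-1)) ^ q :=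
      one_add_mul_self_le_rpow_one_add (by linarith) hq
    have e : 1 + 1/(x-1) = x/(x-1) := by field_simp; ring
    have h2 : q / x ≤ q / (x-1) :=
      div_le_div_of_nonneg_left (by linarith) hx1 (by linarith)
    rw [mul_one_div] at hb
    rw [← e]; linarith
  have hdiv : (x / (x-1)) ^ q = x ^ q / (x-1) ^ q := Real.div_rpow hx0.le hx1.le q
  have hxq : (0:ℝ) < x ^ q := Real.rpow_pos_of_pos hx0 q
  have hx1q : (0:ℝ) < (x-1) ^ q := Real.rpow_pos_of_pos hx1 q
  have hxnq : x ^ (-q) = (x ^ q)⁻¹ := Real.rpow_neg hx0.le q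
  have hx1nq : (x-1) ^ (-q) = ((x-1) ^ q)⁻¹ := Real.rpow_neg hx1.le q
  rw [hdiv] at key
  have hmul := mul_le_mul_of_nonneg_right key (inv_pos.2 hxq).le
  have h2 : x ^ q / (x-1)^q * (x^q)⁻¹ = ((x-1)^q)⁻¹ := by field_simp
  have h3 : (1 + q/x) * (x^q)⁻¹ = (x^q)⁻¹ + q * ((x^q)⁻¹ * x⁻¹) := by ring
  rw [h2, h3] at hmul
  rw [h1, hxnq, hx1nq]
  linarith

lemma tail_summable {q : ℝ} (hq : 1 < q) (t : ℕ) :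
    Summable (fun k : ℕ => ((t+k:ℕ):ℝ) ^ (-(q+1))) := by
  have h : Summable (fun k : ℕ => (k:ℝ) ^ (-(q+1))) := by
    rw [Real.summable_nat_rpow]; linarith
  exact ((summable_nat_add_iff t).2 h).congr (fun n => by rw [Nat.add_comm])

lemma tail_bound {q : ℝ} (hq : 1 < q) {t : ℕ} (ht : 1 ≤ t) :
    ∑' k : ℕ, ((t+k : ℕ):ℝ) ^ (-(q+1)) ≤ (1 + 1/q) * (t:ℝ) ^ (-q) := by
  have hq0 : (0:ℝ) < q := by linarith
  have htR : (1:ℝ) ≤ (t:ℝ) := by exact_mod_cast ht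
  have h1q : (0:ℝ) ≤ 1/q := by positivity
  have hRHS : 0 ≤ (1 + 1/q) * (t:ℝ) ^ (-q) :=
    mul_nonneg (by linarith) (Real.rpow_nonneg (by positivity) _)
  apply Real.tsum_le_of_sum_range_le (fun n => Real.rpow_nonneg (by positivity) _)
  intro m
  cases m with
  | zero => simpa using hRHS
  | succ m =>
    rw [Finset.sum_range_succ']
    have h0 : ((t+0:ℕ):ℝ) ^ (-(q+1)) ≤ (t:ℝ)^(-q) := by
      simp only [Nat.add_zero]
      exact Real.rpow_le_rpow_of_exponent_le htR (by linarith)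
    have hterm : ∀ k:ℕ, ((t+(k+1):ℕ):ℝ) ^ (-(q+1)) ≤
        (1/q) * (((t+k:ℕ):ℝ)^(-q) - ((t+(k+1):ℕ):ℝ)^(-q)) := by
      intro k
      have hk : (0:ℝ) ≤ (k:ℝ) := Nat.cast_nonneg k
      have hx : (2:ℝ) ≤ ((t+(k+1):ℕ):ℝ) := by push_cast; linarith
      have hb := bern_step hq.le hx
      have hx1 : ((t+(k+1):ℕ):ℝ) - 1 = ((t+k:ℕ):ℝ) := by push_cast; ring
      rw [hx1] at hb
      calc ((t+(k+1):ℕ):ℝ)^(-(q+1))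
          = (1/q) * (q * ((t+(k+1):ℕ):ℝ)^(-(q+1))) := by field_simp
        _ ≤ (1/q) * (((t+k:ℕ):ℝ)^(-q) - ((t+(k+1):ℕ):ℝ)^(-q)) :=
            mul_le_mul_of_nonneg_left hb h1q
    calc (∑ k ∈ Finset.range m, ((t+(k+1):ℕ):ℝ)^(-(q+1))) + ((t+0:ℕ):ℝ)^(-(q+1))
        ≤ (∑ k ∈ Finset.range m, (1/q) * (((t+k:ℕ):ℝ)^(-q) - ((t+(k+1):ℕ):ℝ)^(-q)))
            + (t:ℝ)^(-q) :=
          add_le_add (Finset.sum_le_sum (fun k _ => hterm k)) h0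
      _ = (1/q) * (((t+0:ℕ):ℝ)^(-q) - ((t+m:ℕ):ℝ)^(-q)) + (t:ℝ)^(-q) := by
          rw [← Finset.mul_sum, Finset.sum_range_sub' (fun k => ((t+k:ℕ):ℝ)^(-q))]
      _ ≤ (1/q) * ((t:ℝ)^(-q)) + (t:ℝ)^(-q) := by
          have hnn : (0:ℝ) ≤ ((t+m:ℕ):ℝ)^(-q) := Real.rpow_nonneg (by positivity) _
          have h00 : ((t+0:ℕ):ℝ)^(-q) = (t:ℝ)^(-q) := by norm_num
          rw [h00]
          nlinarith
      _ = (1+1/q) * (t:ℝ)^(-q) := by ring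


lemma conv_reindex {f : ℕ → ℕ → ℝ} (hf : ∀ a b, 0 ≤ f a b) (m : ℕ) :
    ∑ k ∈ Finset.range m, ∑ l ∈ Finset.Ioo 0 k, f l (k-l) ≤
    ∑ l ∈ Finset.range m, ∑ r ∈ Finset.range m, f l r := by
  classical
  have h1 : ∑ k ∈ Finset.range m, ∑ l ∈ Finset.Ioo 0 k, f l (k-l)
      = ∑ x ∈ (Finset.range m).sigma (fun k => Finset.Ioo 0 k), f x.2 (x.1 - x.2) :=
    Finset.sum_sigma' _ _ _
  set S := (Finset.range m).sigma (fun k => Finset.Ioo 0 k) with hS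
  set g : (Σ _ : ℕ, ℕ) → ℕ × ℕ := fun x => (x.2, x.1 - x.2) with hg
  have hinj : ∀ x ∈ S, ∀ y ∈ S, g x = g y → x = y := by
    rintro ⟨k, l⟩ hx ⟨k', l'⟩ hy hxy
    simp only [hS, Finset.mem_sigma, Finset.mem_range, Finset.mem_Ioo] at hx hy
    simp only [hg, Prod.mk.injEq] at hxy
    obtain ⟨h1, h2⟩ := hxy
    have hk : k = k' := by omega
    subst hk; subst h1; rfl
  have h2 : ∑ x ∈ S, f x.2 (x.1 - x.2) = ∑ p ∈ S.image g, f p.1 p.2 := by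
    rw [Finset.sum_image hinj]
  have hsub : S.image g ⊆ Finset.range m ×ˢ Finset.range m := by
    intro p hp
    simp only [Finset.mem_image] at hp
    obtain ⟨⟨k, l⟩, hx, rfl⟩ := hp
    simp only [hS, Finset.mem_sigma, Finset.mem_range, Finset.mem_Ioo] at hx
    simp only [hg, Finset.mem_product, Finset.mem_range]
    omega
  rw [h1, h2, ← Finset.sum_product']
  exact Finset.sum_le_sum_of_subset_of_nonneg hsub (fun p _ _ => hf p.1 p.2)

section
attribute [local instance] Matrix.linftyOpNormedRing Matrix.linftyOpNormedAlgebra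

lemma entry_le_norm {d : ℕ} (a : Matrix (Fin d) (Fin d) ℂ) (i j : Fin d) : ‖a i j‖ ≤ ‖a‖ := by
  have h : ‖a i j‖₊ ≤ ‖a‖₊ := by
    rw [Matrix.linfty_opNNNorm_def]
    exact le_trans
      (Finset.single_le_sum (f := fun j => ‖a i j‖₊) (fun _ _ => zero_le) (Finset.mem_univ j))
      (Finset.le_sup (f := fun i => ∑ j, ‖a i j‖₊) (Finset.mem_univ i))
  exact h

lemma gelfand {d : ℕ} (M : Matrix (Fin d) (Fin d) ℝ) (h : specRad M < 1) :
    ∃ c r : ℝ, 1 ≤ c ∧ 0 < r ∧ r < 1 ∧ ∀ (n : ℕ) (i j : Fin d), (M^n) i j ≤ c * r^n := by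
  classical
  set a : Matrix (Fin d) (Fin d) ℂ := (M.map Complex.ofReal) with ha
  haveI : CompleteSpace (Matrix (Fin d) (Fin d) ℂ) := FiniteDimensional.complete ℂ _
  have htd := spectrum.pow_norm_pow_one_div_tendsto_nhds_spectralRadius a
  have hlt : spectralRadius ℂ a < 1 := h
  have hne : spectralRadius ℂ a ≠ ⊤ := hlt.trans_le le_top |>.ne
  have hρ1 : (spectralRadius ℂ a).toReal < 1 :=
    ENNReal.toReal_lt_of_lt_ofReal (by simpa [ENNReal.ofReal_one] using hlt)
  set r : ℝ := max (1/2) (((spectralRadius ℂ a).toReal + 1)/2) with hrdef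
  have hr1 : r < 1 := by apply max_lt <;> [norm_num; linarith]
  have hr0 : (0:ℝ) < r := lt_of_lt_of_le (by norm_num) (le_max_left _ _)
  have hρr : spectralRadius ℂ a < ENNReal.ofReal r :=
    (ENNReal.lt_ofReal_iff_toReal_lt hne).2
      (lt_of_lt_of_le (by linarith) (le_max_right _ _))
  have hev := htd.eventually_lt_const hρr
  obtain ⟨N, hN⟩ := Filter.eventually_atTop.1 hev
  have key : ∀ n, max N 1 ≤ n → ‖a^n‖ ≤ r^n := by
    intro n hn
    have hn1 : 1 ≤ n := le_trans (le_max_right _ _) hn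
    have h2 := hN n (le_trans (le_max_left _ _) hn)
    have h3 : ‖a^n‖^(1/(n:ℝ)) < r := by
      exact (ENNReal.ofReal_lt_ofReal_iff hr0).1 h2
    have hnn : (0:ℝ) < (n:ℝ) := by exact_mod_cast hn1
    have h4 : (‖a^n‖^(1/(n:ℝ)))^(n:ℝ) ≤ r^(n:ℝ) :=
      Real.rpow_le_rpow (Real.rpow_nonneg (norm_nonneg _) _) h3.le hnn.le
    rw [← Real.rpow_mul (norm_nonneg _), one_div_mul_cancel hnn.ne', Real.rpow_one,
      Real.rpow_natCast] at h4
    exact h4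
  set N₁ := max N 1 with hN₁
  set c : ℝ := 1 + ∑ n ∈ Finset.range N₁, ‖a^n‖ / r^n with hcdef
  have hsnn : 0 ≤ ∑ n ∈ Finset.range N₁, ‖a^n‖ / r^n :=
    Finset.sum_nonneg (fun n _ => by positivity)
  have hc1 : 1 ≤ c := by simp only [hcdef]; linarith
  refine ⟨c, r, hc1, hr0, hr1, ?_⟩
  intro n i j
  have hmap : a^n = (M^n).map Complex.ofReal := by
    have := (map_pow (Complex.ofRealHom.mapMatrix (m := Fin d)) M n).symm
    simp only [RingHom.mapMatrix_apply] at this; exact this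
  have hentry : (M^n) i j ≤ ‖a^n‖ := by
    have h5 := entry_le_norm (a^n) i j
    rw [hmap] at h5
    simp only [Matrix.map_apply, Complex.norm_real] at h5
    rw [← hmap] at h5
    exact le_trans (le_abs_self _) h5
  by_cases hn : N₁ ≤ n
  · exact le_trans hentry (le_trans (key n hn) (le_mul_of_one_le_left (by positivity) hc1))
  · push_neg at hn
    have h6 : ‖a^n‖/r^n ≤ ∑ m ∈ Finset.range N₁, ‖a^m‖/r^m :=
      Finset.single_le_sum (f := fun m => ‖a^m‖/r^m) (fun m _ => by positivity) (Finset.mem_range.2 hn)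
    have h7 : ‖a^n‖ / r^n ≤ c := by simp only [hcdef]; linarith
    exact le_trans hentry ((div_le_iff₀ (by positivity : (0:ℝ) < r^n)).1 h7)

end

/-- Polynomially dominated kernels: if the nonnegative matrices `(A_k)_{k≥1}` satisfy
`ρ(Σ A_k) < 1` and `A_k ≼ C k^{−2(1+β)}`, then with `B_k = Σ_{n≥1} (A^{*n})_k` and
`U_t = Σ_{k≥t} A_k`: (i) `U_t ≼ C₁ t^{−(1+2β)}`; (ii) `Σ_k k B_k` is finite entrywise;
(iii) `Σ_{k=1}^{t−1} B_k U_{t−k} ≼ C₂ / t` for all `t ≥ 1`.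
The family `(A_k)_{k≥1}` is encoded with `A 0 = 0`. -/
theorem stmt8 {d : ℕ} (β : ℝ) (hβ : 0 < β) (A : ℕ → Matrix (Fin d) (Fin d) ℝ)
    (hA0 : A 0 = 0) (hAnn : ∀ k i j, 0 ≤ A k i j) (hAsum : Summable A)
    (hρ : specRad (∑' k, A k) < 1)
    (C : Matrix (Fin d) (Fin d) ℝ) (hC : ∀ i j, 0 ≤ C i j)
    (hdom : ∀ k : ℕ, 1 ≤ k → ∀ i j, A k i j ≤ C i j * (k : ℝ) ^ (-(2 * (1 + β))))
    (B : ℕ → Matrix (Fin d) (Fin d) ℝ) (hB : ∀ k, B k = ∑' n : ℕ, matConvPow A n k)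
    (U : ℕ → Matrix (Fin d) (Fin d) ℝ) (hU : ∀ t, U t = ∑' k : ℕ, A (t + k)) :
    (∃ C₁ : Matrix (Fin d) (Fin d) ℝ, (∀ i j, 0 ≤ C₁ i j) ∧
      ∀ t : ℕ, 1 ≤ t → ∀ i j, U t i j ≤ C₁ i j * (t : ℝ) ^ (-(1 + 2 * β))) ∧
    (∀ i j, Summable (fun k : ℕ => (k : ℝ) * B k i j)) ∧
    (∃ C₂ : Matrix (Fin d) (Fin d) ℝ, (∀ i j, 0 ≤ C₂ i j) ∧
      ∀ t : ℕ, 1 ≤ t → ∀ i j,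
        (∑ k ∈ Finset.Ioo 0 t, B k * U (t - k)) i j ≤ C₂ i j / t) := by
  classical
  have hq : (1:ℝ) < 1 + 2*β := by linarith
  have hAsum' : ∀ i j, Summable fun k => A k i j :=
    fun i j => Pi.summable.1 (Pi.summable.1 hAsum i) j
  set M := ∑' k, A k with hMdef
  have hMapp : ∀ i j, M i j = ∑' k, A k i j := fun i j => by
    erw [hMdef, tsum_apply hAsum, tsum_apply (Pi.summable.1 hAsum i)]
  have hMnn : ∀ i j, 0 ≤ M i j := fun i j => by
    rw [hMapp]; exact tsum_nonneg fun k => hAnn k i j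
  obtain ⟨c, r, hc1, hr0, hr1, hMb⟩ := gelfand M hρ
  have hc0 : (0:ℝ) < c := lt_of_lt_of_le one_pos hc1
  have hAM : ∀ (s : Finset ℕ) (i j : Fin d), ∑ k ∈ s, A k i j ≤ M i j := fun s i j => by
    rw [hMapp]; exact Summable.sum_le_tsum s (fun k _ => hAnn k i j) (hAsum' i j)
  have hMpnn : ∀ n (i j : Fin d), 0 ≤ (M^n) i j := by
    intro n
    induction n with
    | zero => intro i j; rw [pow_zero]; by_cases h : i = j <;> simp [Matrix.one_apply, h]
    | succ n ih =>
      intro i j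
      rw [pow_succ, Matrix.mul_apply]
      exact Finset.sum_nonneg fun l _ => mul_nonneg (ih i l) (hMnn l j)
  -- nonnegativity of convolution powers
  have hPnn : ∀ n k (i j : Fin d), 0 ≤ matConvPow A n k i j := by
    intro n
    induction n with
    | zero => exact fun k i j => hAnn k i j
    | succ n ih =>
      intro k i j
      show 0 ≤ matConv A (matConvPow A n) k i j
      rw [matConv, Matrix.sum_apply]
      refine Finset.sum_nonneg fun l _ => ?_
      rw [Matrix.mul_apply]
      exact Finset.sum_nonneg fun cc _ => mul_nonneg (hAnn l i cc) (ih (k-l) cc j)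
  -- F1 : partial sums of convolution powers dominated by powers of M
  have hF1 : ∀ n m (i j : Fin d),
      ∑ k ∈ Finset.range m, matConvPow A n k i j ≤ (M^(n+1)) i j := by
    intro n
    induction n with
    | zero =>
      intro m i j
      have := hAM (Finset.range m) i j
      simpa [pow_one, matConvPow] using this
    | succ n ih =>
      intro m i j
      have hnnf : ∀ a b, 0 ≤ (A a * matConvPow A n b) i j := fun a b => by
        rw [Matrix.mul_apply]
        exact Finset.sum_nonneg fun l _ => mul_nonneg (hAnn a i l) (hPnn n b l j)
      have step1 : ∑ k ∈ Finset.range m, matConvPow A (n+1) k i j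
          = ∑ k ∈ Finset.range m, ∑ l ∈ Finset.Ioo 0 k, (A l * matConvPow A n (k-l)) i j := by
        refine Finset.sum_congr rfl fun k _ => ?_
        show matConv A (matConvPow A n) k i j = _
        rw [matConv, Matrix.sum_apply]
      have step3 : ∑ l ∈ Finset.range m, ∑ r ∈ Finset.range m, (A l * matConvPow A n r) i j
          = ∑ cc : Fin d, (∑ l ∈ Finset.range m, A l i cc)
              * (∑ r ∈ Finset.range m, matConvPow A n r cc j) := by
        calc ∑ l ∈ Finset.range m, ∑ r ∈ Finset.range m, (A l * matConvPow A n r) i j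
            = ∑ l ∈ Finset.range m, ∑ r ∈ Finset.range m, ∑ cc : Fin d,
                A l i cc * matConvPow A n r cc j := by simp_rw [Matrix.mul_apply]
          _ = ∑ l ∈ Finset.range m, ∑ cc : Fin d, ∑ r ∈ Finset.range m,
                A l i cc * matConvPow A n r cc j :=
              Finset.sum_congr rfl fun l _ => Finset.sum_comm
          _ = ∑ cc : Fin d, ∑ l ∈ Finset.range m, ∑ r ∈ Finset.range m,
                A l i cc * matConvPow A n r cc j := Finset.sum_comm
          _ = ∑ cc : Fin d, (∑ l ∈ Finset.range m, A l i cc)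
              * (∑ r ∈ Finset.range m, matConvPow A n r cc j) := by
              simp_rw [Finset.sum_mul, Finset.mul_sum]
      calc ∑ k ∈ Finset.range m, matConvPow A (n+1) k i j
          = ∑ k ∈ Finset.range m, ∑ l ∈ Finset.Ioo 0 k, (A l * matConvPow A n (k-l)) i j := step1
        _ ≤ ∑ l ∈ Finset.range m, ∑ r ∈ Finset.range m, (A l * matConvPow A n r) i j :=
            conv_reindex hnnf m
        _ = ∑ cc : Fin d, (∑ l ∈ Finset.range m, A l i cc)
              * (∑ r ∈ Finset.range m, matConvPow A n r cc j) := step3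
        _ ≤ ∑ cc : Fin d, M i cc * (M^(n+1)) cc j := by
            refine Finset.sum_le_sum fun cc _ => ?_
            exact mul_le_mul (hAM _ i cc) (ih m cc j)
              (Finset.sum_nonneg fun r _ => hPnn n r cc j) (hMnn i cc)
        _ = (M^(n+2)) i j := by
            rw [show M^(n+2) = M * M^(n+1) from pow_succ' M (n+1), Matrix.mul_apply]
  -- sum of k * A k
  have hkAsum : ∀ i j, Summable fun k : ℕ => (k:ℝ) * A k i j := by
    intro i j
    have hs : Summable (fun k : ℕ => (k:ℝ) ^ (-(1+2*β))) := by
      rw [Real.summable_nat_rpow]; linarith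
    apply Summable.of_nonneg_of_le
      (fun k => mul_nonneg (Nat.cast_nonneg k) (hAnn k i j)) ?_ (hs.mul_left (C i j))
    intro k
    cases k with
    | zero =>
      have h0 : ((0:ℕ):ℝ)^(-(1+2*β)) = 0 := by
        rw [Nat.cast_zero]; exact Real.zero_rpow (by intro h; linarith)
      rw [h0, mul_zero, Nat.cast_zero, zero_mul]
    | succ k =>
      have h1 := hdom (k+1) (Nat.succ_le_succ (Nat.zero_le k)) i j
      have hpos : (0:ℝ) < ((k+1:ℕ):ℝ) := by positivity
      calc ((k+1:ℕ):ℝ) * A (k+1) i j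
          ≤ ((k+1:ℕ):ℝ) * (C i j * ((k+1:ℕ):ℝ)^(-(2*(1+β)))) :=
            mul_le_mul_of_nonneg_left h1 (Nat.cast_nonneg _)
        _ = C i j * ((k+1:ℕ):ℝ)^(-(1+2*β)) := by
            rw [show -(2*(1+β)) = -(1+2*β) + (-1) by ring, Real.rpow_add hpos,
              Real.rpow_neg_one]
            field_simp
  set SM : Matrix (Fin d) (Fin d) ℝ := Matrix.of (fun i j => ∑' k : ℕ, (k:ℝ) * A k i j)
    with hSMdef
  have hSMapp : ∀ i j, SM i j = ∑' k : ℕ, (k:ℝ) * A k i j := fun i j => rfl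
  have hSnn : ∀ i j, 0 ≤ SM i j := fun i j =>
    tsum_nonneg fun k => mul_nonneg (Nat.cast_nonneg k) (hAnn k i j)
  have hSb : ∀ (s : Finset ℕ) (i j : Fin d), ∑ k ∈ s, (k:ℝ) * A k i j ≤ SM i j :=
    fun s i j => Summable.sum_le_tsum s (fun k _ => mul_nonneg (Nat.cast_nonneg k) (hAnn k i j))
      (hkAsum i j)
  set σ : ℝ := ∑ i : Fin d, ∑ j : Fin d, SM i j with hσdef
  have hσnn : 0 ≤ σ := Finset.sum_nonneg fun i _ => Finset.sum_nonneg fun j _ => hSnn i j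
  set V : ℕ → Matrix (Fin d) (Fin d) ℝ :=
    fun n => ∑ a ∈ Finset.range (n+1), M^a * SM * M^(n-a) with hVdef
  have htermnn : ∀ a b (i j : Fin d), 0 ≤ (M^a * SM * M^b) i j := by
    intro a b i j
    rw [Matrix.mul_apply]
    refine Finset.sum_nonneg fun l _ => mul_nonneg ?_ (hMpnn b l j)
    rw [Matrix.mul_apply]
    exact Finset.sum_nonneg fun cc _ => mul_nonneg (hMpnn a i cc) (hSnn cc l)
  have hVnn : ∀ n (i j : Fin d), 0 ≤ V n i j := by
    intro n i j
    simp only [hVdef, Matrix.sum_apply]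
    exact Finset.sum_nonneg fun a _ => htermnn a (n-a) i j
  have hVb : ∀ n (i j : Fin d), V n i j ≤ ((n:ℝ)+1) * ((c*c*σ) * r^n) := by
    intro n i j
    simp only [hVdef, Matrix.sum_apply]
    have hterm : ∀ a ∈ Finset.range (n+1), (M^a * SM * M^(n-a)) i j ≤ (c*c*σ) * r^n := by
      intro a ha
      have haa : a ≤ n := by
        simp only [Finset.mem_range] at ha; omega
      have hrr : r^a * r^(n-a) = r^n := by
        rw [← pow_add]; congr 1; omega
      rw [Matrix.mul_apply]
      have hle : ∀ l : Fin d, (M^a * SM) i l * (M^(n-a)) l j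
          ≤ (∑ cc : Fin d, (c * r^a) * SM cc l) * (c * r^(n-a)) := by
        intro l
        apply mul_le_mul ?_ (hMb (n-a) l j) (hMpnn (n-a) l j)
          (Finset.sum_nonneg fun cc _ => mul_nonneg (by positivity) (hSnn cc l))
        rw [Matrix.mul_apply]
        exact Finset.sum_le_sum fun cc _ =>
          mul_le_mul_of_nonneg_right (hMb a i cc) (hSnn cc l)
      calc ∑ l : Fin d, (M^a * SM) i l * (M^(n-a)) l j
          ≤ ∑ l : Fin d, (∑ cc : Fin d, (c * r^a) * SM cc l) * (c * r^(n-a)) :=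
            Finset.sum_le_sum fun l _ => hle l
        _ = ∑ l : Fin d, ∑ cc : Fin d, ((c * r^a) * SM cc l * (c * r^(n-a))) := by
            simp_rw [Finset.sum_mul]
        _ = ∑ cc : Fin d, ∑ l : Fin d, ((c * r^a) * SM cc l * (c * r^(n-a))) :=
            Finset.sum_comm
        _ = ∑ cc : Fin d, ∑ l : Fin d, ((c*c*r^n) * SM cc l) := by
            refine Finset.sum_congr rfl fun cc _ => Finset.sum_congr rfl fun l _ => ?_
            rw [← hrr]; ring
        _ = (c*c*σ) * r^n := by
            simp_rw [← Finset.mul_sum]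
            ring
    calc ∑ a ∈ Finset.range (n+1), (M^a * SM * M^(n-a)) i j
        ≤ ∑ a ∈ Finset.range (n+1), (c*c*σ) * r^n := Finset.sum_le_sum hterm
      _ = ((n:ℝ)+1) * ((c*c*σ) * r^n) := by
          rw [Finset.sum_const, Finset.card_range]; push_cast; ring
  -- recursion for V
  have hVrec : ∀ n, V (n+1) = SM * M^(n+1) + M * V n := by
    intro n
    simp only [hVdef]
    rw [Finset.sum_range_succ']
    simp only [pow_zero, one_mul, Nat.sub_zero, Nat.succ_sub_succ]
    rw [add_comm]
    congr 1
    rw [Finset.mul_sum]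
    exact Finset.sum_congr rfl fun a _ => by
      simp only [pow_succ', mul_assoc]
  -- F2 : weighted partial sums of convolution powers dominated by V
  have hF2 : ∀ n m (i j : Fin d),
      ∑ k ∈ Finset.range m, (k:ℝ) * matConvPow A n k i j ≤ V n i j := by
    intro n
    induction n with
    | zero =>
      intro m i j
      have hV0 : V 0 = SM := by
        simp [hVdef]
      rw [hV0]
      exact hSb (Finset.range m) i j
    | succ n ih =>
      intro m i j
      have hnnf : ∀ a b, 0 ≤ ((a+b:ℕ):ℝ) * (A a * matConvPow A n b) i j := fun a b =>
        mul_nonneg (Nat.cast_nonneg _) (by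
          rw [Matrix.mul_apply]
          exact Finset.sum_nonneg fun l _ => mul_nonneg (hAnn a i l) (hPnn n b l j))
      have step1 : ∑ k ∈ Finset.range m, (k:ℝ) * matConvPow A (n+1) k i j
          = ∑ k ∈ Finset.range m, ∑ l ∈ Finset.Ioo 0 k,
              ((l+(k-l):ℕ):ℝ) * (A l * matConvPow A n (k-l)) i j := by
        refine Finset.sum_congr rfl fun k _ => ?_
        have e : matConvPow A (n+1) k i j
            = ∑ l ∈ Finset.Ioo 0 k, (A l * matConvPow A n (k-l)) i j := by
          show matConv A (matConvPow A n) k i j = _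
          rw [matConv, Matrix.sum_apply]
        rw [e, Finset.mul_sum]
        refine Finset.sum_congr rfl fun l hl => ?_
        simp only [Finset.mem_Ioo] at hl
        congr 2
        omega
      have step2 : ∑ k ∈ Finset.range m, ∑ l ∈ Finset.Ioo 0 k,
            ((l+(k-l):ℕ):ℝ) * (A l * matConvPow A n (k-l)) i j
          ≤ ∑ l ∈ Finset.range m, ∑ r ∈ Finset.range m,
            ((l+r:ℕ):ℝ) * (A l * matConvPow A n r) i j :=
        conv_reindex (f := fun a b => ((a+b:ℕ):ℝ) * (A a * matConvPow A n b) i j) hnnf m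
      have step4a : ∑ l ∈ Finset.range m, ∑ r ∈ Finset.range m,
            (l:ℝ) * (A l * matConvPow A n r) i j ≤ (SM * M^(n+1)) i j := by
        have e : ∑ l ∈ Finset.range m, ∑ r ∈ Finset.range m,
              (l:ℝ) * (A l * matConvPow A n r) i j
            = ∑ cc : Fin d, (∑ l ∈ Finset.range m, (l:ℝ) * A l i cc)
                * (∑ r ∈ Finset.range m, matConvPow A n r cc j) := by
          calc ∑ l ∈ Finset.range m, ∑ r ∈ Finset.range m,
                (l:ℝ) * (A l * matConvPow A n r) i j
              = ∑ l ∈ Finset.range m, ∑ r ∈ Finset.range m, ∑ cc : Fin d,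
                  ((l:ℝ) * A l i cc) * matConvPow A n r cc j := by
                refine Finset.sum_congr rfl fun l _ => Finset.sum_congr rfl fun rr _ => ?_
                rw [Matrix.mul_apply, Finset.mul_sum]
                exact Finset.sum_congr rfl fun cc _ => by ring
            _ = ∑ l ∈ Finset.range m, ∑ cc : Fin d, ∑ r ∈ Finset.range m,
                  ((l:ℝ) * A l i cc) * matConvPow A n r cc j :=
                Finset.sum_congr rfl fun l _ => Finset.sum_comm
            _ = ∑ cc : Fin d, ∑ l ∈ Finset.range m, ∑ r ∈ Finset.range m,
                  ((l:ℝ) * A l i cc) * matConvPow A n r cc j := Finset.sum_comm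
            _ = ∑ cc : Fin d, (∑ l ∈ Finset.range m, (l:ℝ) * A l i cc)
                * (∑ r ∈ Finset.range m, matConvPow A n r cc j) := by
                simp_rw [Finset.sum_mul, Finset.mul_sum]
        rw [e, Matrix.mul_apply]
        refine Finset.sum_le_sum fun cc _ => ?_
        exact mul_le_mul (hSb (Finset.range m) i cc) (hF1 n m cc j)
          (Finset.sum_nonneg fun rr _ => hPnn n rr cc j) (hSnn i cc)
      have step4b : ∑ l ∈ Finset.range m, ∑ r ∈ Finset.range m,
            (r:ℝ) * (A l * matConvPow A n r) i j ≤ (M * V n) i j := by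
        have e : ∑ l ∈ Finset.range m, ∑ r ∈ Finset.range m,
              (r:ℝ) * (A l * matConvPow A n r) i j
            = ∑ cc : Fin d, (∑ l ∈ Finset.range m, A l i cc)
                * (∑ r ∈ Finset.range m, (r:ℝ) * matConvPow A n r cc j) := by
          calc ∑ l ∈ Finset.range m, ∑ r ∈ Finset.range m,
                (r:ℝ) * (A l * matConvPow A n r) i j
              = ∑ l ∈ Finset.range m, ∑ r ∈ Finset.range m, ∑ cc : Fin d,
                  A l i cc * ((r:ℝ) * matConvPow A n r cc j) := by
                refine Finset.sum_congr rfl fun l _ => Finset.sum_congr rfl fun rr _ => ?_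
                rw [Matrix.mul_apply, Finset.mul_sum]
                exact Finset.sum_congr rfl fun cc _ => by ring
            _ = ∑ l ∈ Finset.range m, ∑ cc : Fin d, ∑ r ∈ Finset.range m,
                  A l i cc * ((r:ℝ) * matConvPow A n r cc j) :=
                Finset.sum_congr rfl fun l _ => Finset.sum_comm
            _ = ∑ cc : Fin d, ∑ l ∈ Finset.range m, ∑ r ∈ Finset.range m,
                  A l i cc * ((r:ℝ) * matConvPow A n r cc j) := Finset.sum_comm
            _ = ∑ cc : Fin d, (∑ l ∈ Finset.range m, A l i cc)
                * (∑ r ∈ Finset.range m, (r:ℝ) * matConvPow A n r cc j) := by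
                simp_rw [Finset.sum_mul, Finset.mul_sum]
        rw [e, Matrix.mul_apply]
        refine Finset.sum_le_sum fun cc _ => ?_
        exact mul_le_mul (hAM (Finset.range m) i cc) (ih m cc j)
          (Finset.sum_nonneg fun rr _ =>
            mul_nonneg (Nat.cast_nonneg rr) (hPnn n rr cc j)) (hMnn i cc)
      calc ∑ k ∈ Finset.range m, (k:ℝ) * matConvPow A (n+1) k i j
          = ∑ k ∈ Finset.range m, ∑ l ∈ Finset.Ioo 0 k,
              ((l+(k-l):ℕ):ℝ) * (A l * matConvPow A n (k-l)) i j := step1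
        _ ≤ ∑ l ∈ Finset.range m, ∑ r ∈ Finset.range m,
              ((l+r:ℕ):ℝ) * (A l * matConvPow A n r) i j := step2
        _ = (∑ l ∈ Finset.range m, ∑ r ∈ Finset.range m,
              (l:ℝ) * (A l * matConvPow A n r) i j)
            + ∑ l ∈ Finset.range m, ∑ r ∈ Finset.range m,
              (r:ℝ) * (A l * matConvPow A n r) i j := by
            rw [← Finset.sum_add_distrib]
            refine Finset.sum_congr rfl fun l _ => ?_
            rw [← Finset.sum_add_distrib]
            refine Finset.sum_congr rfl fun rr _ => ?_
            push_cast
            ring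
        _ ≤ (SM * M^(n+1)) i j + (M * V n) i j := add_le_add step4a step4b
        _ = V (n+1) i j := by rw [hVrec n, Matrix.add_apply]
  -- shifted summability and entry formula for U
  have hshift : ∀ t : ℕ, Summable fun k : ℕ => A (t+k) := by
    intro t
    refine Pi.summable.2 fun i => Pi.summable.2 fun j => ?_
    exact ((summable_nat_add_iff t).2 (hAsum' i j)).congr fun n => by rw [Nat.add_comm]
  have hUapp : ∀ t (i j : Fin d), U t i j = ∑' k : ℕ, A (t+k) i j := by
    intro t i j
    erw [hU t, tsum_apply (hshift t), tsum_apply (Pi.summable.1 (hshift t) i)]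
  have hUnn : ∀ t (i j : Fin d), 0 ≤ U t i j := fun t i j => by
    rw [hUapp]; exact tsum_nonneg fun k => hAnn (t+k) i j
  -- Part (i)
  have hκ : (0:ℝ) < 1 + 1/(1+2*β) := by positivity
  set C₁ : Matrix (Fin d) (Fin d) ℝ :=
    Matrix.of (fun i j => C i j * (1 + 1/(1+2*β))) with hC₁def
  have hC₁nn : ∀ i j, 0 ≤ C₁ i j := fun i j => mul_nonneg (hC i j) hκ.le
  have hi : ∀ t:ℕ, 1 ≤ t → ∀ i j, U t i j ≤ C₁ i j * (t:ℝ)^(-(1 + 2*β)) := by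
    intro t ht i j
    have hsum2 : Summable fun k : ℕ => C i j * ((t+k:ℕ):ℝ)^(-((1+2*β)+1)) :=
      (tail_summable hq t).mul_left _
    calc U t i j = ∑' k : ℕ, A (t+k) i j := hUapp t i j
      _ ≤ ∑' k : ℕ, C i j * ((t+k:ℕ):ℝ)^(-((1+2*β)+1)) := by
          refine Summable.tsum_le_tsum ?_ (Pi.summable.1 (Pi.summable.1 (hshift t) i) j) hsum2
          intro k
          have h1 := hdom (t+k) (by omega) i j
          rwa [show -(2*(1+β)) = -((1+2*β)+1) by ring] at h1
      _ = C i j * ∑' k : ℕ, ((t+k:ℕ):ℝ)^(-((1+2*β)+1)) := tsum_mul_left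
      _ ≤ C i j * ((1 + 1/(1+2*β)) * (t:ℝ)^(-(1+2*β))) :=
          mul_le_mul_of_nonneg_left (tail_bound hq ht) (hC i j)
      _ = C₁ i j * (t:ℝ)^(-(1+2*β)) := by
          simp only [hC₁def, Matrix.of_apply]
          ring
  -- Part (ii)
  have hgr : Summable (fun n : ℕ => r^n) := summable_geometric_of_lt_one hr0.le hr1
  have hgeo1 : Summable (fun n : ℕ => c * r^(n+1)) :=
    (hgr.mul_left (c*r)).congr fun n => by rw [pow_succ]; ring
  have hw : Summable (fun n : ℕ => ((n:ℝ)+1) * ((c*c*σ) * r^n)) := by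
    have h1 : Summable (fun n : ℕ => (n:ℝ) * r^n) := by
      have h2 := summable_pow_mul_geometric_of_norm_lt_one 1
        (by rwa [Real.norm_eq_abs, abs_of_nonneg hr0.le] : ‖r‖ < 1)
      exact h2.congr fun n => by rw [pow_one]
    exact ((h1.mul_left (c*c*σ)).add (hgr.mul_left (c*c*σ))).congr fun n => by ring
  have hPsumn : ∀ k (i j : Fin d), Summable fun n => matConvPow A n k i j := by
    intro k i j
    refine Summable.of_nonneg_of_le (fun n => hPnn n k i j) ?_ hgeo1
    intro n
    calc matConvPow A n k i j
        ≤ ∑ k' ∈ Finset.range (k+1), matConvPow A n k' i j :=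
          Finset.single_le_sum (f := fun k' => matConvPow A n k' i j)
            (fun k' _ => hPnn n k' i j) (Finset.mem_range.2 (Nat.lt_succ_self k))
      _ ≤ (M^(n+1)) i j := hF1 n (k+1) i j
      _ ≤ c * r^(n+1) := hMb (n+1) i j
  have hPmatsum : ∀ k, Summable fun n => matConvPow A n k :=
    fun k => Pi.summable.2 fun i => Pi.summable.2 fun j => hPsumn k i j
  have hBapp : ∀ k (i j : Fin d), B k i j = ∑' n : ℕ, matConvPow A n k i j := by
    intro k i j
    erw [hB k, tsum_apply (hPmatsum k), tsum_apply (Pi.summable.1 (hPmatsum k) i)]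
  have hBnn : ∀ k (i j : Fin d), 0 ≤ B k i j := fun k i j => by
    rw [hBapp]; exact tsum_nonneg fun n => hPnn n k i j
  have hii : ∀ i j, Summable fun k : ℕ => (k:ℝ) * B k i j := by
    intro i j
    apply summable_of_sum_range_le
      (fun k => mul_nonneg (Nat.cast_nonneg k) (hBnn k i j))
    intro m
    have e1 : ∑ k ∈ Finset.range m, (k:ℝ) * B k i j
        = ∑' n : ℕ, ∑ k ∈ Finset.range m, (k:ℝ) * matConvPow A n k i j := by
      rw [Summable.tsum_finsetSum (fun k _ => (hPsumn k i j).mul_left (k:ℝ))]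
      refine Finset.sum_congr rfl fun k _ => ?_
      rw [hBapp k i j, tsum_mul_left]
    calc ∑ k ∈ Finset.range m, (k:ℝ) * B k i j
        = ∑' n : ℕ, ∑ k ∈ Finset.range m, (k:ℝ) * matConvPow A n k i j := e1
      _ ≤ ∑' n : ℕ, ((n:ℝ)+1) * ((c*c*σ) * r^n) :=
          Summable.tsum_le_tsum (fun n => le_trans (hF2 n m i j) (hVb n i j))
            (Summable.of_nonneg_of_le
              (fun n => Finset.sum_nonneg fun k _ =>
                mul_nonneg (Nat.cast_nonneg k) (hPnn n k i j))
              (fun n => le_trans (hF2 n m i j) (hVb n i j)) hw) hw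
  -- Part (iii)
  have hBsum : ∀ i j, Summable fun k : ℕ => B k i j := by
    intro i j
    apply (summable_nat_add_iff 1).1
    refine Summable.of_nonneg_of_le (fun k => hBnn (k+1) i j) ?_
      ((summable_nat_add_iff 1).2 (hii i j))
    intro k
    have h1 : (1:ℝ) ≤ ((k+1:ℕ):ℝ) := by exact_mod_cast Nat.succ_le_succ (Nat.zero_le k)
    exact le_mul_of_one_le_left (hBnn (k+1) i j) h1
  set Sb : Matrix (Fin d) (Fin d) ℝ :=
    Matrix.of (fun i l => ∑' k : ℕ, (k:ℝ) * B k i l) with hSbdef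
  set Tb : Matrix (Fin d) (Fin d) ℝ :=
    Matrix.of (fun i l => ∑' k : ℕ, B k i l) with hTbdef
  have hSbnn : ∀ i l, 0 ≤ Sb i l := fun i l =>
    tsum_nonneg fun k => mul_nonneg (Nat.cast_nonneg k) (hBnn k i l)
  have hTbnn : ∀ i l, 0 ≤ Tb i l := fun i l => tsum_nonneg fun k => hBnn k i l
  set C₂ : Matrix (Fin d) (Fin d) ℝ :=
    Matrix.of (fun i j => (∑ l : Fin d, Sb i l * U 1 l j)
      + ∑ l : Fin d, Tb i l * C₁ l j) with hC₂def
  have hC₂nn : ∀ i j, 0 ≤ C₂ i j := by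
    intro i j
    apply add_nonneg
    · exact Finset.sum_nonneg fun l _ => mul_nonneg (hSbnn i l) (hUnn 1 l j)
    · exact Finset.sum_nonneg fun l _ => mul_nonneg (hTbnn i l) (hC₁nn l j)
  have hUmono : ∀ m : ℕ, 1 ≤ m → ∀ (l j : Fin d), U m l j ≤ U 1 l j := by
    intro m hm l j
    rw [hUapp m l j, hUapp 1 l j]
    refine Summable.tsum_le_tsum_of_inj (fun k => (m-1)+k) (add_right_injective (m-1))
      (fun cc _ => hAnn (1+cc) l j) ?_
      (Pi.summable.1 (Pi.summable.1 (hshift m) l) j)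
      (Pi.summable.1 (Pi.summable.1 (hshift 1) l) j)
    intro k
    have e : 1 + ((m-1)+k) = m + k := by omega
    rw [e]
  have hUb : ∀ m : ℕ, 1 ≤ m → ∀ (l j : Fin d), (m:ℝ) * U m l j ≤ C₁ l j := by
    intro m hm l j
    have h1 := hi m hm l j
    have hm1 : (1:ℝ) ≤ (m:ℝ) := by exact_mod_cast hm
    have h2 : (m:ℝ) * ((m:ℝ)^(-(1+2*β))) ≤ 1 := by
      have e : (m:ℝ) * (m:ℝ)^(-(1+2*β)) = (m:ℝ)^(1 + -(1+2*β)) := by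
        rw [Real.rpow_add (lt_of_lt_of_le one_pos hm1), Real.rpow_one]
      rw [e]
      exact Real.rpow_le_one_of_one_le_of_nonpos hm1 (by linarith)
    calc (m:ℝ) * U m l j ≤ (m:ℝ) * (C₁ l j * (m:ℝ)^(-(1+2*β))) :=
          mul_le_mul_of_nonneg_left h1 (by positivity)
      _ = C₁ l j * ((m:ℝ) * (m:ℝ)^(-(1+2*β))) := by ring
      _ ≤ C₁ l j * 1 := mul_le_mul_of_nonneg_left h2 (hC₁nn l j)
      _ = C₁ l j := mul_one _
  refine ⟨⟨C₁, hC₁nn, hi⟩, hii, ⟨C₂, hC₂nn, ?_⟩⟩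
  intro t ht i j
  have ht0 : (0:ℝ) < (t:ℝ) := by exact_mod_cast ht
  rw [le_div_iff₀ ht0]
  have e0 : (∑ k ∈ Finset.Ioo 0 t, B k * U (t-k)) i j
      = ∑ k ∈ Finset.Ioo 0 t, ∑ l : Fin d, B k i l * U (t-k) l j := by
    rw [Matrix.sum_apply]
    exact Finset.sum_congr rfl fun k _ => Matrix.mul_apply
  rw [e0, Finset.sum_mul]
  have key : ∀ k ∈ Finset.Ioo 0 t, (∑ l : Fin d, B k i l * U (t-k) l j) * (t:ℝ)
      ≤ ∑ l : Fin d, ((k:ℝ) * B k i l * U 1 l j + B k i l * C₁ l j) := by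
    intro k hk
    simp only [Finset.mem_Ioo] at hk
    have hk1 : 1 ≤ t - k := by omega
    have htk : (t:ℝ) = (k:ℝ) + ((t-k:ℕ):ℝ) := by
      rw [Nat.cast_sub (le_of_lt hk.2)]; ring
    rw [Finset.sum_mul]
    refine Finset.sum_le_sum fun l _ => ?_
    rw [htk, mul_add]
    apply add_le_add
    · calc B k i l * U (t-k) l j * (k:ℝ) = ((k:ℝ) * B k i l) * U (t-k) l j := by ring
        _ ≤ ((k:ℝ) * B k i l) * U 1 l j :=
            mul_le_mul_of_nonneg_left (hUmono (t-k) hk1 l j)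
              (mul_nonneg (Nat.cast_nonneg k) (hBnn k i l))
    · calc B k i l * U (t-k) l j * ((t-k:ℕ):ℝ)
          = B k i l * (((t-k:ℕ):ℝ) * U (t-k) l j) := by ring
        _ ≤ B k i l * C₁ l j :=
            mul_le_mul_of_nonneg_left (hUb (t-k) hk1 l j) (hBnn k i l)
  calc ∑ k ∈ Finset.Ioo 0 t, (∑ l : Fin d, B k i l * U (t-k) l j) * (t:ℝ)
      ≤ ∑ k ∈ Finset.Ioo 0 t, ∑ l : Fin d,
          ((k:ℝ) * B k i l * U 1 l j + B k i l * C₁ l j) := Finset.sum_le_sum key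
    _ = (∑ l : Fin d, (∑ k ∈ Finset.Ioo 0 t, (k:ℝ) * B k i l) * U 1 l j)
        + ∑ l : Fin d, (∑ k ∈ Finset.Ioo 0 t, B k i l) * C₁ l j := by
        rw [Finset.sum_comm, ← Finset.sum_add_distrib]
        refine Finset.sum_congr rfl fun l _ => ?_
        rw [Finset.sum_add_distrib, Finset.sum_mul, Finset.sum_mul]
    _ ≤ (∑ l : Fin d, Sb i l * U 1 l j) + ∑ l : Fin d, Tb i l * C₁ l j := by
        apply add_le_add
        · refine Finset.sum_le_sum fun l _ => mul_le_mul_of_nonneg_right ?_ (hUnn 1 l j)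
          exact Summable.sum_le_tsum (Finset.Ioo 0 t)
            (fun k _ => mul_nonneg (Nat.cast_nonneg k) (hBnn k i l)) (hii i l)
        · refine Finset.sum_le_sum fun l _ => mul_le_mul_of_nonneg_right ?_ (hC₁nn l j)
          exact Summable.sum_le_tsum (Finset.Ioo 0 t) (fun k _ => hBnn k i l) (hBsum i l)
    _ = C₂ i j := rfl
end

section
/- Let (A_k)_{k≥1} be a summable family of d×d real matrices with nonnegative entries and set S = Σ_{k=1}^∞ A_k. If ρ(S) < 1, then: (i) for every n ≥ 1, Σ_{k=1}^∞ (A^{*n})_k = S^n; and (ii) the double family ((A^{*n})_k)_{n≥1, k≥1} is summable, so that B_k := Σ_{n=1}^∞ (A^{*n})_k is well defined and Σ_{k=1}^∞ B_k = (I − S)^{−1} S. -/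
open Finset Filter
set_option maxHeartbeats 1000000

section Aux

variable {d : ℕ}

lemma mat_summable_iff {ι : Type*} (f : ι → Matrix (Fin d) (Fin d) ℝ) :
    Summable f ↔ ∀ i j, Summable fun k => f k i j := by
  exact Pi.summable.trans (forall_congr' fun i => Pi.summable)

lemma mat_tsum_apply {ι : Type*} (f : ι → Matrix (Fin d) (Fin d) ℝ) (hf : Summable f)
    (i j : Fin d) : (∑' k, f k) i j = ∑' k, f k i j := by
  exact ((Pi.hasSum.mp (Pi.hasSum.mp hf.hasSum i)) j).tsum_eq.symm

lemma scalarConv {u v : ℕ → ℝ} (hu0 : u 0 = 0) (hv0 : v 0 = 0)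
    (hun : ∀ k, 0 ≤ u k) (hvn : ∀ k, 0 ≤ v k) (hu : Summable u) (hv : Summable v) :
    Summable (fun t => ∑ k ∈ Finset.Ioo 0 t, u k * v (t - k)) ∧
      ∑' t, ∑ k ∈ Finset.Ioo 0 t, u k * v (t - k) = (∑' k, u k) * (∑' k, v k) := by
  have hmul : Summable fun x : ℕ × ℕ => u x.1 * v x.2 := hu.mul_of_nonneg hv hun hvn
  have key : ∀ t, ∑ k ∈ Finset.range (t + 1), u k * v (t - k)
      = ∑ k ∈ Finset.Ioo 0 t, u k * v (t - k) := by
    intro t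
    refine (Finset.sum_subset ?_ ?_).symm
    · intro k hk
      simp only [Finset.mem_Ioo] at hk
      exact Finset.mem_range.mpr (by omega)
    · intro k hk hk'
      simp only [Finset.mem_range, Finset.mem_Ioo, not_and_or, not_lt] at hk hk'
      rcases hk' with h0 | ht
      · interval_cases k
        simp [hu0]
      · have : k = t := by omega
        subst this
        simp [hv0]
  constructor
  · simpa only [key] using summable_sum_mul_range_of_summable_mul hmul
  · rw [← funext key, ← hu.tsum_mul_tsum_eq_tsum_sum_range hv hmul]

end Aux

section Spec

attribute [local instance] Matrix.linftyOpNormedAddCommGroup Matrix.linftyOpNormedRing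
  Matrix.linftyOpNormedAlgebra

lemma pow_entry_summable {d : ℕ} (S : Matrix (Fin d) (Fin d) ℝ) (hρ : specRad S < 1) :
    ∀ i j, Summable fun n : ℕ => (S ^ n) i j := by
  set a : Matrix (Fin d) (Fin d) ℂ := S.map Complex.ofReal with ha
  haveI : CompleteSpace (Matrix (Fin d) (Fin d) ℂ) := FiniteDimensional.complete ℂ _
  obtain ⟨r, hr1, hr2⟩ := ENNReal.lt_iff_exists_nnreal_btwn.mp hρ
  have hr2' : (r : ℝ) < 1 := by exact_mod_cast hr2
  have hgel := spectrum.pow_nnnorm_pow_one_div_tendsto_nhds_spectralRadius a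
  have hev : ∀ᶠ n : ℕ in atTop, (‖a ^ n‖₊ : ENNReal) ^ (1 / (n : ℝ)) < (r : ENNReal) :=
    hgel.eventually_lt_const hr1
  have hbound : ∀ᶠ n : ℕ in atTop, ‖a ^ n‖ ≤ (r : ℝ) ^ n := by
    filter_upwards [hev, eventually_gt_atTop 0] with n hn hnpos
    have h1 : ((‖a ^ n‖₊ : ENNReal) ^ (1 / (n : ℝ))) ^ (n : ℝ) ≤ (r : ENNReal) ^ (n : ℝ) :=
      ENNReal.rpow_le_rpow hn.le (Nat.cast_nonneg n)
    rw [← ENNReal.rpow_mul, one_div, inv_mul_cancel₀ (by exact_mod_cast hnpos.ne'),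
      ENNReal.rpow_one, ENNReal.rpow_natCast, ← ENNReal.coe_pow, ENNReal.coe_le_coe] at h1
    calc ‖a ^ n‖ = ((‖a ^ n‖₊ : NNReal) : ℝ) := (coe_nnnorm _).symm
      _ ≤ ((r ^ n : NNReal) : ℝ) := by exact_mod_cast h1
      _ = (r : ℝ) ^ n := by push_cast; ring
  have hnorm : Summable fun n : ℕ => ‖a ^ n‖ := by
    obtain ⟨N, hN⟩ := eventually_atTop.mp hbound
    have hgeom : Summable fun n : ℕ => (r : ℝ) ^ (n + N) :=
      (summable_nat_add_iff N).mpr (summable_geometric_of_lt_one r.coe_nonneg hr2')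
    have htail : Summable fun n : ℕ => ‖a ^ (n + N)‖ :=
      hgeom.of_nonneg_of_le (fun n => norm_nonneg _) (fun n => hN (n + N) (Nat.le_add_left _ _))
    exact (summable_nat_add_iff N).mp htail
  intro i j
  have hmap : ∀ n : ℕ, a ^ n = (S ^ n).map Complex.ofReal := by
    intro n
    have h := map_pow
      (Complex.ofRealHom.mapMatrix : Matrix (Fin d) (Fin d) ℝ →+* Matrix (Fin d) (Fin d) ℂ) S n
    exact h.symm
  have hentry : ∀ n : ℕ, |(S ^ n) i j| ≤ ‖a ^ n‖ := by
    intro n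
    have h1 : ‖(a ^ n) i j‖₊ ≤ ‖a ^ n‖₊ := by
      rw [Matrix.linfty_opNNNorm_def]
      exact (Finset.single_le_sum (f := fun j => ‖(a ^ n) i j‖₊) (fun _ _ => zero_le)
        (Finset.mem_univ j)).trans
        (Finset.le_sup (f := fun i => ∑ j, ‖(a ^ n) i j‖₊) (Finset.mem_univ i))
    calc |(S ^ n) i j| = ‖(a ^ n) i j‖ := by
          rw [hmap, Matrix.map_apply, Complex.norm_real, Real.norm_eq_abs]
      _ ≤ ‖a ^ n‖ := h1
  exact (hnorm.of_nonneg_of_le (fun n => abs_nonneg _) hentry).of_abs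

end Spec

section ConvLemmas

variable {d : ℕ}

lemma matConv_entry (a b : ℕ → Matrix (Fin d) (Fin d) ℝ) (t : ℕ) (i j : Fin d) :
    matConv a b t i j = ∑ m, ∑ k ∈ Finset.Ioo 0 t, a k i m * b (t - k) m j := by
  rw [matConv]
  rw [Matrix.sum_apply]
  simp_rw [Matrix.mul_apply]
  exact Finset.sum_comm

lemma matConv_summable_tsum {a b : ℕ → Matrix (Fin d) (Fin d) ℝ}
    (ha0 : a 0 = 0) (hb0 : b 0 = 0)
    (han : ∀ k i j, 0 ≤ a k i j) (hbn : ∀ k i j, 0 ≤ b k i j)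
    (ha : Summable a) (hb : Summable b) :
    Summable (matConv a b) ∧ ∑' t, matConv a b t = (∑' k, a k) * (∑' k, b k) := by
  have hsc : ∀ (i m j : Fin d),
      Summable (fun t => ∑ k ∈ Finset.Ioo 0 t, a k i m * b (t - k) m j) ∧
      ∑' t, ∑ k ∈ Finset.Ioo 0 t, a k i m * b (t - k) m j
        = (∑' k, a k i m) * (∑' k, b k m j) := by
    intro i m j
    exact scalarConv (u := fun k => a k i m) (v := fun k => b k m j) (by simp [ha0]) (by simp [hb0]) (fun k => han k i m) (fun k => hbn k m j)
      ((mat_summable_iff a).mp ha i m) ((mat_summable_iff b).mp hb m j)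
  have hsummable : Summable (matConv a b) := by
    rw [mat_summable_iff]
    intro i j
    exact (summable_sum fun m _ => (hsc i m j).1).congr
      fun t => (matConv_entry a b t i j).symm
  refine ⟨hsummable, ?_⟩
  ext i j
  rw [mat_tsum_apply _ hsummable i j]
  simp_rw [matConv_entry a b _ i j]
  rw [Summable.tsum_finsetSum fun m _ => (hsc i m j).1]
  rw [Matrix.mul_apply]
  refine Finset.sum_congr rfl fun m _ => ?_
  rw [(hsc i m j).2, mat_tsum_apply _ ha i m, mat_tsum_apply _ hb m j]

lemma matConvPow_zero {A : ℕ → Matrix (Fin d) (Fin d) ℝ} (hA0 : A 0 = 0) (n : ℕ) :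
    matConvPow A n 0 = 0 := by
  cases n with
  | zero => exact hA0
  | succ n => simp [matConvPow, matConv]

lemma matConvPow_nonneg {A : ℕ → Matrix (Fin d) (Fin d) ℝ} (hAnn : ∀ k i j, 0 ≤ A k i j)
    (n : ℕ) : ∀ k i j, 0 ≤ matConvPow A n k i j := by
  induction n with
  | zero => exact hAnn
  | succ n ih =>
    intro k i j
    rw [show matConvPow A (n + 1) = matConv A (matConvPow A n) from rfl, matConv_entry]
    exact Finset.sum_nonneg fun m _ => Finset.sum_nonneg fun l _ =>
      mul_nonneg (hAnn l i m) (ih _ m j)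

end ConvLemmas

/-- If the nonnegative matrices `(A_k)_{k≥1}` are summable with `S = Σ_k A_k` and `ρ(S) < 1`,
then: (i) `Σ_k (A^{*n})_k = Sⁿ` for every `n ≥ 1` (here `matConvPow A n = A^{*(n+1)}`);
(ii) the double family `((A^{*n})_k)_{n,k}` is summable, so `B_k = Σ_{n≥1} (A^{*n})_k` is well
defined and `Σ_k B_k = (I − S)⁻¹ S`.
The family `(A_k)_{k≥1}` is encoded with `A 0 = 0`. -/
theorem stmt15 {d : ℕ} (A : ℕ → Matrix (Fin d) (Fin d) ℝ)
    (hA0 : A 0 = 0) (hAnn : ∀ k i j, 0 ≤ A k i j) (hAsum : Summable A)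
    (S : Matrix (Fin d) (Fin d) ℝ) (hS : S = ∑' k, A k) (hρ : specRad S < 1) :
    (∀ n : ℕ, ∑' k : ℕ, matConvPow A n k = S ^ (n + 1)) ∧
    Summable (fun q : ℕ × ℕ => matConvPow A q.1 q.2) ∧
    ∑' k : ℕ, (∑' n : ℕ, matConvPow A n k) = (1 - S)⁻¹ * S := by
  have part1 : ∀ n, Summable (matConvPow A n) ∧ ∑' k, matConvPow A n k = S ^ (n + 1) := by
    intro n
    induction n with
    | zero => exact ⟨hAsum, by rw [pow_one]; exact hS.symm⟩
    | succ n ih =>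
      have h := matConv_summable_tsum hA0 (matConvPow_zero hA0 n) hAnn
        (matConvPow_nonneg hAnn n) hAsum ih.1
      refine ⟨h.1, ?_⟩
      rw [show matConvPow A (n + 1) = matConv A (matConvPow A n) from rfl, h.2, ← hS, ih.2,
        ← pow_succ']
  have hpowS : Summable fun n : ℕ => S ^ n :=
    (mat_summable_iff _).mpr (pow_entry_summable S hρ)
  have hpowS1 : Summable fun n : ℕ => S ^ (n + 1) := (summable_nat_add_iff 1).mpr hpowS
  have hdouble : Summable (fun q : ℕ × ℕ => matConvPow A q.1 q.2) := by
    rw [mat_summable_iff]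
    intro i j
    rw [summable_prod_of_nonneg (fun q => matConvPow_nonneg hAnn q.1 q.2 i j)]
    constructor
    · exact fun n => (mat_summable_iff _).mp (part1 n).1 i j
    · have hEq : ∀ n : ℕ, ∑' k, matConvPow A n k i j = (S ^ (n + 1)) i j := by
        intro n
        rw [← mat_tsum_apply _ (part1 n).1, (part1 n).2]
      rw [funext hEq]
      exact (mat_summable_iff _).mp hpowS1 i j
  refine ⟨fun n => (part1 n).2, hdouble, ?_⟩
  have hswap : ∑' k, ∑' n, matConvPow A n k = ∑' n, ∑' k, matConvPow A n k :=
    Summable.tsum_comm hdouble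
  have htsum1 : ∑' n, ∑' k, matConvPow A n k = ∑' n : ℕ, S ^ (n + 1) :=
    tsum_congr fun n => (part1 n).2
  set T : Matrix (Fin d) (Fin d) ℝ := ∑' n : ℕ, S ^ n with hT
  have hT1 : T = 1 + ∑' n : ℕ, S ^ (n + 1) := by
    rw [hT, Summable.tsum_eq_zero_add hpowS, pow_zero]
  have hST : S * T = ∑' n : ℕ, S ^ (n + 1) := by
    rw [hT, ← hpowS.tsum_mul_left S]
    exact tsum_congr fun n => (pow_succ' S n).symm
  have hTS : T * S = ∑' n : ℕ, S ^ (n + 1) := by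
    rw [hT, ← hpowS.tsum_mul_right S]
    exact tsum_congr fun n => (pow_succ S n).symm
  have hunit : (1 - S) * T = 1 := by
    rw [sub_mul, one_mul, hST, hT1]
    abel
  have hinv : (1 - S)⁻¹ = T := Matrix.inv_eq_right_inv hunit
  rw [hswap, htsum1, hinv, hTS]
end
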